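/- With p₁, p₂ ∈ ℚ[a, c] obtained by substituting N = 2 into the two explicit polynomials p₁(N, a, c) and p₂(N, a, c) (as in the previous item), the Hilbert series of the graded quotient ℚ[a, c]/(p₁, p₂), where deg a = 1 and deg c = 2, equals 1 + t + 2t² + 2t³ + 3t⁴ + 3t⁵ + 4t⁶ + 4t⁷ + 5t⁸ + 4t⁹ + 4t¹⁰ + 3t¹¹ + 3t¹² + 2t¹³ + 2t¹⁴ + t¹⁵ + t¹⁶. -/

import Mathlib

open MvPolynomial

noncomputable section

/-- The variable `a`, of weighted degree 1. -/
def a : MvPolynomial (Fin 2) ℚ := X 0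

/-- The variable `c`, of weighted degree 2. -/
def c : MvPolynomial (Fin 2) ℚ := X 1

/-- The grading weights: `deg a = 1`, `deg c = 2`. -/
def w : Fin 2 → ℕ := ![1, 2]

/-- The first relation polynomial `p₁(N, a, c)`. -/
def p1 (N : ℚ) : MvPolynomial (Fin 2) ℚ :=
  C (1620*N - 1296) * a^9
  + C (-19440*N^3 + 46656*N^2 - 35244*N + 8289) * a^7 * c
  + C (40824*N^5 - 163296*N^4 + 246708*N^3 - 174069*N^2 + 56478*N - 6584) * a^5 * c^2
  + C (-19440*N^7 + 108864*N^6 - 246708*N^5 + 290115*N^4 - 188260*N^3 + 65840*N^2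
      - 11038*N + 631) * a^3 * c^3
  + C (1620*N^9 - 11664*N^8 + 35244*N^7 - 58023*N^6 + 56478*N^5 - 32920*N^4
      + 11038*N^3 - 1893*N^2 + 120*N) * a * c^4

/-- The second relation polynomial `p₂(N, a, c)`. -/
def p2 (N : ℚ) : MvPolynomial (Fin 2) ℚ :=
  C 324 * a^10
  + C (-14580*N^2 + 23328*N - 8811) * a^8 * c
  + C (68040*N^4 - 217728*N^3 + 246708*N^2 - 116046*N + 18826) * a^6 * c^2
  + C (-68040*N^6 + 326592*N^5 - 616770*N^4 + 580230*N^3 - 282390*N^2 + 65840*N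
      - 5519) * a^4 * c^3
  + C (14580*N^8 - 93312*N^7 + 246708*N^6 - 348138*N^5 + 282390*N^4 - 131680*N^3
      + 33114*N^2 - 3786*N + 120) * a^2 * c^4
  + C (-324*N^10 + 2592*N^9 - 8811*N^8 + 16578*N^7 - 18826*N^6 + 13168*N^5
      - 5519*N^4 + 1262*N^3 - 120*N^2) * c^5

/-- The degree `i` graded piece of the quotient of `ℚ[a,c]` (weighted grading) by `I`. -/
def piece (I : Ideal (MvPolynomial (Fin 2) ℚ)) (i : ℕ) :
    Submodule ℚ (MvPolynomial (Fin 2) ℚ ⧸ I) :=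
  Submodule.map (Ideal.Quotient.mkₐ ℚ I).toLinearMap
    (weightedHomogeneousSubmodule ℚ w i)

end


set_option maxHeartbeats 2000000

noncomputable section
namespace Hilb

abbrev R2 := MvPolynomial (Fin 2) ℚ

def mon (j k : ℕ) : R2 := X 0 ^ j * X 1 ^ k

def ee (j k : ℕ) : Fin 2 →₀ ℕ := Finsupp.single 0 j + Finsupp.single 1 k

def I2 : Ideal R2 := Ideal.span {p1 2, p2 2}

abbrev Qt := R2 ⧸ I2

def mkq : R2 →ₐ[ℚ] Qt := Ideal.Quotient.mkₐ ℚ I2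

lemma ee_apply0 (j k : ℕ) : ee j k 0 = j := by
  simp [ee, Finsupp.single_apply]

lemma ee_apply1 (j k : ℕ) : ee j k 1 = k := by
  simp [ee, Finsupp.single_apply]

lemma ee_eta (v : Fin 2 →₀ ℕ) : ee (v 0) (v 1) = v := by
  ext i
  fin_cases i <;> simp [ee, Finsupp.single_apply]

lemma mon_eq_monomial (j k : ℕ) : mon j k = monomial (ee j k) 1 := by
  rw [mon, ee, X_pow_eq_monomial, X_pow_eq_monomial, monomial_mul, one_mul]

lemma mon_mul (j k j' k' : ℕ) : mon j k * mon j' k' = mon (j + j') (k + k') := by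
  simp only [mon]; ring

lemma monomial_eq_C_mul_mon (v : Fin 2 →₀ ℕ) (r : ℚ) :
    monomial v r = C r * mon (v 0) (v 1) := by
  rw [mon_eq_monomial, ee_eta, C_mul_monomial, mul_one]

lemma weight_ee (j k : ℕ) : (Finsupp.weight w) (ee j k) = j + 2 * k := by
  rw [Finsupp.weight_apply, Finsupp.sum_fintype _ _ (fun i => by simp)]
  rw [Fin.sum_univ_two, ee_apply0, ee_apply1]
  show j • w 0 + k • w 1 = j + 2 * k
  simp [w, Matrix.cons_val_zero, Matrix.cons_val_one]
  ring

lemma mon_homog (j k : ℕ) : IsWeightedHomogeneous w (mon j k) (j + 2 * k) := by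
  rw [mon_eq_monomial]
  exact isWeightedHomogeneous_monomial _ _ _ (weight_ee j k)

def Frow0 : ℕ → R2
  | 0 => C (1 : ℚ) * mon 0 0
  | 1 => C (1 : ℚ) * mon 1 0
  | 2 => C (1 : ℚ) * mon 2 0
  | 3 => C (1 : ℚ) * mon 3 0
  | 4 => C (1 : ℚ) * mon 4 0
  | 5 => C (1 : ℚ) * mon 5 0
  | 6 => C (1 : ℚ) * mon 6 0
  | 7 => C (1 : ℚ) * mon 7 0
  | 8 => C (1 : ℚ) * mon 8 0
  | 9 => C (-2764 : ℚ) * mon 1 4 + C (38005 : ℚ) * mon 3 3 + C (-77392 : ℚ) * mon 5 2 + C (31095 : ℚ) * mon 7 1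
  | 10 => C (-165840 : ℚ) * mon 0 5 + C (8783992 : ℚ) * mon 2 4 + C (-37476385 : ℚ) * mon 4 3 + C (23985301 : ℚ) * mon 6 2
  | 11 => C (1769742212 : ℚ) * mon 1 5 + C (-19336541147 : ℚ) * mon 3 4 + C (23293682555 : ℚ) * mon 5 3
  | 12 => C (186349460440 : ℚ) * mon 0 6 + C (-7891468711630 : ℚ) * mon 2 5 + C (20254366419595 : ℚ) * mon 4 4
  | 13 => C (-5693762400700 : ℚ) * mon 1 6 + C (37724431304105 : ℚ) * mon 3 5
  | 14 => C (-150897725216420 : ℚ) * mon 0 7 + C (3919641254715151 : ℚ) * mon 2 6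
  | 15 => C (109638854849 : ℚ) * mon 1 7
  | 16 => C (438555419396 : ℚ) * mon 0 8
  | _ => 0

def Frow1 : ℕ → R2
  | 0 => C (1 : ℚ) * mon 0 1
  | 1 => C (1 : ℚ) * mon 1 1
  | 2 => C (1 : ℚ) * mon 2 1
  | 3 => C (1 : ℚ) * mon 3 1
  | 4 => C (1 : ℚ) * mon 4 1
  | 5 => C (1 : ℚ) * mon 5 1
  | 6 => C (1 : ℚ) * mon 6 1
  | 7 => C (1944 : ℚ) * mon 7 1
  | 8 => C (-10368 : ℚ) * mon 0 5 + C (578520 : ℚ) * mon 2 4 + C (-2746674 : ℚ) * mon 4 3 + C (2321640 : ℚ) * mon 6 2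
  | 9 => C (174132000 : ℚ) * mon 1 5 + C (-2006995680 : ℚ) * mon 3 4 + C (2693386710 : ℚ) * mon 5 3
  | 10 => C (21547093680 : ℚ) * mon 0 6 + C (-939801200184 : ℚ) * mon 2 5 + C (2547033372279 : ℚ) * mon 4 4
  | 11 => C (-722968277508 : ℚ) * mon 1 6 + C (4937978271303 : ℚ) * mon 3 5
  | 12 => C (-19751913085212 : ℚ) * mon 0 7 + C (522129477957633 : ℚ) * mon 2 6
  | 13 => C (14688662319 : ℚ) * mon 1 7
  | 14 => C (58754649276 : ℚ) * mon 0 8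
  | _ => 0

def Frow2 : ℕ → R2
  | 0 => C (1 : ℚ) * mon 0 2
  | 1 => C (1 : ℚ) * mon 1 2
  | 2 => C (1 : ℚ) * mon 2 2
  | 3 => C (1 : ℚ) * mon 3 2
  | 4 => C (1 : ℚ) * mon 4 2
  | 5 => C (1944 : ℚ) * mon 5 2
  | 6 => C (330318 : ℚ) * mon 6 2
  | 7 => C (25509816 : ℚ) * mon 1 5 + C (-326545506 : ℚ) * mon 3 4 + C (577841040 : ℚ) * mon 5 3
  | 8 => C (4622728320 : ℚ) * mon 0 6 + C (-212243818860 : ℚ) * mon 2 5 + C (639675811845 : ℚ) * mon 4 4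
  | 9 => C (-184481535420 : ℚ) * mon 1 6 + C (1327938561225 : ℚ) * mon 3 5
  | 10 => C (-5311754244900 : ℚ) * mon 0 7 + C (144449666926191 : ℚ) * mon 2 6
  | 11 => C (4100379489 : ℚ) * mon 1 7
  | 12 => C (16401517956 : ℚ) * mon 0 8
  | _ => 0

def Frow3 : ℕ → R2
  | 0 => C (1 : ℚ) * mon 0 3
  | 1 => C (1 : ℚ) * mon 1 3
  | 2 => C (1 : ℚ) * mon 2 3
  | 3 => C (1944 : ℚ) * mon 3 3
  | 4 => C (330318 : ℚ) * mon 4 3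
  | 5 => C (164513430 : ℚ) * mon 5 3
  | 6 => C (1316107440 : ℚ) * mon 0 6 + C (-66935152872 : ℚ) * mon 2 5 + C (265432795047 : ℚ) * mon 4 4
  | 7 => C (-78772850244 : ℚ) * mon 1 6 + C (629041058919 : ℚ) * mon 3 5
  | 8 => C (-2516164235676 : ℚ) * mon 0 7 + C (71923750546977 : ℚ) * mon 2 6
  | 9 => C (2072550159 : ℚ) * mon 1 7
  | 10 => C (8290200636 : ℚ) * mon 0 8
  | _ => 0

def Frow4 : ℕ → R2
  | 0 => C (1 : ℚ) * mon 0 4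
  | 1 => C (1944 : ℚ) * mon 1 4
  | 2 => C (330318 : ℚ) * mon 2 4
  | 3 => C (164513430 : ℚ) * mon 3 4
  | 4 => C (147430295505 : ℚ) * mon 4 4
  | 5 => C (-46451398860 : ℚ) * mon 1 6 + C (486622360665 : ℚ) * mon 3 5
  | 6 => C (-1946489442660 : ℚ) * mon 0 7 + C (61522082023311 : ℚ) * mon 2 6
  | 7 => C (1822257729 : ℚ) * mon 1 7
  | 8 => C (7289030916 : ℚ) * mon 0 8
  | _ => 0

def Frow5 : ℕ → R2
  | 0 => C (330318 : ℚ) * mon 0 5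
  | 1 => C (164513430 : ℚ) * mon 1 5
  | 2 => C (147430295505 : ℚ) * mon 2 5
  | 3 => C (544195726155 : ℚ) * mon 3 5
  | 4 => C (-2176782904620 : ℚ) * mon 0 7 + C (89893817975601 : ℚ) * mon 2 6
  | 5 => C (2822953599 : ℚ) * mon 1 7
  | 6 => C (11291814396 : ℚ) * mon 0 8
  | _ => 0

def Frow6 : ℕ → R2
  | 0 => C (147430295505 : ℚ) * mon 0 6
  | 1 => C (544195726155 : ℚ) * mon 1 6
  | 2 => C (220968325241811 : ℚ) * mon 2 6
  | 3 => C (8224671069 : ℚ) * mon 1 7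
  | 4 => C (32898684276 : ℚ) * mon 0 8
  | _ => 0

def Frow7 : ℕ → R2
  | 0 => C (220968325241811 : ℚ) * mon 0 7
  | 1 => C (53089242264 : ℚ) * mon 1 7
  | 2 => C (212356969056 : ℚ) * mon 0 8
  | _ => 0

def Frow8 : ℕ → R2
  | 0 => C (5430036927411 : ℚ) * mon 0 8
  | _ => 0

def F (j k : ℕ) : R2 := match k with
  | 0 => Frow0 j
  | 1 => Frow1 j
  | 2 => Frow2 j
  | 3 => Frow3 j
  | 4 => Frow4 j
  | 5 => Frow5 j
  | 6 => Frow6 j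
  | 7 => Frow7 j
  | 8 => Frow8 j
  | _ => 0

lemma F_zero (j k : ℕ) (h : 16 < j + 2 * k) : F j k = 0 := by
  rcases Nat.lt_or_ge k 9 with h9 | h9
  · interval_cases k
    · obtain ⟨m, rfl⟩ : ∃ m, j = m + 17 := ⟨j - 17, by omega⟩
      rfl
    · obtain ⟨m, rfl⟩ : ∃ m, j = m + 15 := ⟨j - 15, by omega⟩
      rfl
    · obtain ⟨m, rfl⟩ : ∃ m, j = m + 13 := ⟨j - 13, by omega⟩
      rfl
    · obtain ⟨m, rfl⟩ : ∃ m, j = m + 11 := ⟨j - 11, by omega⟩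
      rfl
    · obtain ⟨m, rfl⟩ : ∃ m, j = m + 9 := ⟨j - 9, by omega⟩
      rfl
    · obtain ⟨m, rfl⟩ : ∃ m, j = m + 7 := ⟨j - 7, by omega⟩
      rfl
    · obtain ⟨m, rfl⟩ : ∃ m, j = m + 5 := ⟨j - 5, by omega⟩
      rfl
    · obtain ⟨m, rfl⟩ : ∃ m, j = m + 3 := ⟨j - 3, by omega⟩
      rfl
    · obtain ⟨m, rfl⟩ : ∃ m, j = m + 1 := ⟨j - 1, by omega⟩
      rfl
  · obtain ⟨m, rfl⟩ : ∃ m, k = m + 9 := ⟨k - 9, by omega⟩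
    rfl

def NF (e : Fin 2 →₀ ℕ) : R2 := F (e 0) (e 1)

def phi : R2 →ₗ[ℚ] R2 :=
  (basisMonomials (Fin 2) ℚ).constr ℚ NF

lemma phi_monomial (e : Fin 2 →₀ ℕ) (r : ℚ) : phi (monomial e r) = r • NF e := by
  have h1 : monomial e r = r • monomial e (1 : ℚ) := by rw [smul_monomial, smul_eq_mul, mul_one]
  have h2 : basisMonomials (Fin 2) ℚ e = monomial e 1 := by rw [coe_basisMonomials]
  rw [h1, map_smul, ← h2, phi, Module.Basis.constr_basis]

lemma phi_mon (j k : ℕ) : phi (mon j k) = F j k := by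
  rw [mon_eq_monomial, phi_monomial, NF, ee_apply0, ee_apply1, one_smul]

lemma phi_C_mul (r : ℚ) (x : R2) : phi (C r * x) = r • phi x := by
  rw [← smul_eq_C_mul, map_smul]

lemma phi_C_mul_mon (r : ℚ) (j k : ℕ) : phi (C r * mon j k) = r • F j k := by
  rw [phi_C_mul, phi_mon]

lemma p1_expand : p1 2 = C (1944 : ℚ) * mon 9 0 + C (-31095 : ℚ) * mon 7 1 + C (77392 : ℚ) * mon 5 2 + C (-38005 : ℚ) * mon 3 3 + C (2764 : ℚ) * mon 1 4 := by
  unfold p1 a c mon; norm_num [map_ofNat]; ring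

lemma p2_expand : p2 2 = C (324 : ℚ) * mon 10 0 + C (-20475 : ℚ) * mon 8 1 + C (120382 : ℚ) * mon 6 2 + C (-133495 : ℚ) * mon 4 3 + C (27244 : ℚ) * mon 2 4 + C (-480 : ℚ) * mon 0 5 := by
  unfold p2 a c mon; norm_num [map_ofNat]; ring

lemma key1_0_0 : (1944 : ℚ) • F 9 0 + (-31095 : ℚ) • F 7 1 + (77392 : ℚ) • F 5 2 + (-38005 : ℚ) • F 3 3 + (2764 : ℚ) • F 1 4 = 0 := by
  simp only [F, Frow0, Frow1, Frow2, Frow3, Frow4]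
  rw [smul_eq_C_mul, smul_eq_C_mul, smul_eq_C_mul, smul_eq_C_mul, smul_eq_C_mul]
  norm_num [mon, map_ofNat]
  ring

lemma key1_1_0 : (1944 : ℚ) • F 10 0 + (-31095 : ℚ) • F 8 1 + (77392 : ℚ) • F 6 2 + (-38005 : ℚ) • F 4 3 + (2764 : ℚ) • F 2 4 = 0 := by
  simp only [F, Frow0, Frow1, Frow2, Frow3, Frow4]
  rw [smul_eq_C_mul, smul_eq_C_mul, smul_eq_C_mul, smul_eq_C_mul, smul_eq_C_mul]
  norm_num [mon, map_ofNat]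
  ring

lemma key1_2_0 : (1944 : ℚ) • F 11 0 + (-31095 : ℚ) • F 9 1 + (77392 : ℚ) • F 7 2 + (-38005 : ℚ) • F 5 3 + (2764 : ℚ) • F 3 4 = 0 := by
  simp only [F, Frow0, Frow1, Frow2, Frow3, Frow4]
  rw [smul_eq_C_mul, smul_eq_C_mul, smul_eq_C_mul, smul_eq_C_mul, smul_eq_C_mul]
  norm_num [mon, map_ofNat]
  ring

lemma key1_3_0 : (1944 : ℚ) • F 12 0 + (-31095 : ℚ) • F 10 1 + (77392 : ℚ) • F 8 2 + (-38005 : ℚ) • F 6 3 + (2764 : ℚ) • F 4 4 = 0 := by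
  simp only [F, Frow0, Frow1, Frow2, Frow3, Frow4]
  rw [smul_eq_C_mul, smul_eq_C_mul, smul_eq_C_mul, smul_eq_C_mul, smul_eq_C_mul]
  norm_num [mon, map_ofNat]
  ring

lemma key1_4_0 : (1944 : ℚ) • F 13 0 + (-31095 : ℚ) • F 11 1 + (77392 : ℚ) • F 9 2 + (-38005 : ℚ) • F 7 3 + (2764 : ℚ) • F 5 4 = 0 := by
  simp only [F, Frow0, Frow1, Frow2, Frow3, Frow4]
  rw [smul_eq_C_mul, smul_eq_C_mul, smul_eq_C_mul, smul_eq_C_mul, smul_eq_C_mul]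
  norm_num [mon, map_ofNat]
  ring

lemma key1_5_0 : (1944 : ℚ) • F 14 0 + (-31095 : ℚ) • F 12 1 + (77392 : ℚ) • F 10 2 + (-38005 : ℚ) • F 8 3 + (2764 : ℚ) • F 6 4 = 0 := by
  simp only [F, Frow0, Frow1, Frow2, Frow3, Frow4]
  rw [smul_eq_C_mul, smul_eq_C_mul, smul_eq_C_mul, smul_eq_C_mul, smul_eq_C_mul]
  norm_num [mon, map_ofNat]
  ring

lemma key1_6_0 : (1944 : ℚ) • F 15 0 + (-31095 : ℚ) • F 13 1 + (77392 : ℚ) • F 11 2 + (-38005 : ℚ) • F 9 3 + (2764 : ℚ) • F 7 4 = 0 := by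
  simp only [F, Frow0, Frow1, Frow2, Frow3, Frow4]
  rw [smul_eq_C_mul, smul_eq_C_mul, smul_eq_C_mul, smul_eq_C_mul, smul_eq_C_mul]
  norm_num [mon, map_ofNat]
  ring

lemma key1_7_0 : (1944 : ℚ) • F 16 0 + (-31095 : ℚ) • F 14 1 + (77392 : ℚ) • F 12 2 + (-38005 : ℚ) • F 10 3 + (2764 : ℚ) • F 8 4 = 0 := by
  simp only [F, Frow0, Frow1, Frow2, Frow3, Frow4]
  rw [smul_eq_C_mul, smul_eq_C_mul, smul_eq_C_mul, smul_eq_C_mul, smul_eq_C_mul]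
  norm_num [mon, map_ofNat]
  ring

lemma key1_0_1 : (1944 : ℚ) • F 9 1 + (-31095 : ℚ) • F 7 2 + (77392 : ℚ) • F 5 3 + (-38005 : ℚ) • F 3 4 + (2764 : ℚ) • F 1 5 = 0 := by
  simp only [F, Frow1, Frow2, Frow3, Frow4, Frow5]
  rw [smul_eq_C_mul, smul_eq_C_mul, smul_eq_C_mul, smul_eq_C_mul, smul_eq_C_mul]
  norm_num [mon, map_ofNat]
  ring

lemma key1_1_1 : (1944 : ℚ) • F 10 1 + (-31095 : ℚ) • F 8 2 + (77392 : ℚ) • F 6 3 + (-38005 : ℚ) • F 4 4 + (2764 : ℚ) • F 2 5 = 0 := by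
  simp only [F, Frow1, Frow2, Frow3, Frow4, Frow5]
  rw [smul_eq_C_mul, smul_eq_C_mul, smul_eq_C_mul, smul_eq_C_mul, smul_eq_C_mul]
  norm_num [mon, map_ofNat]
  ring

lemma key1_2_1 : (1944 : ℚ) • F 11 1 + (-31095 : ℚ) • F 9 2 + (77392 : ℚ) • F 7 3 + (-38005 : ℚ) • F 5 4 + (2764 : ℚ) • F 3 5 = 0 := by
  simp only [F, Frow1, Frow2, Frow3, Frow4, Frow5]
  rw [smul_eq_C_mul, smul_eq_C_mul, smul_eq_C_mul, smul_eq_C_mul, smul_eq_C_mul]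
  norm_num [mon, map_ofNat]
  ring

lemma key1_3_1 : (1944 : ℚ) • F 12 1 + (-31095 : ℚ) • F 10 2 + (77392 : ℚ) • F 8 3 + (-38005 : ℚ) • F 6 4 + (2764 : ℚ) • F 4 5 = 0 := by
  simp only [F, Frow1, Frow2, Frow3, Frow4, Frow5]
  rw [smul_eq_C_mul, smul_eq_C_mul, smul_eq_C_mul, smul_eq_C_mul, smul_eq_C_mul]
  norm_num [mon, map_ofNat]
  ring

lemma key1_4_1 : (1944 : ℚ) • F 13 1 + (-31095 : ℚ) • F 11 2 + (77392 : ℚ) • F 9 3 + (-38005 : ℚ) • F 7 4 + (2764 : ℚ) • F 5 5 = 0 := by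
  simp only [F, Frow1, Frow2, Frow3, Frow4, Frow5]
  rw [smul_eq_C_mul, smul_eq_C_mul, smul_eq_C_mul, smul_eq_C_mul, smul_eq_C_mul]
  norm_num [mon, map_ofNat]
  ring

lemma key1_5_1 : (1944 : ℚ) • F 14 1 + (-31095 : ℚ) • F 12 2 + (77392 : ℚ) • F 10 3 + (-38005 : ℚ) • F 8 4 + (2764 : ℚ) • F 6 5 = 0 := by
  simp only [F, Frow1, Frow2, Frow3, Frow4, Frow5]
  rw [smul_eq_C_mul, smul_eq_C_mul, smul_eq_C_mul, smul_eq_C_mul, smul_eq_C_mul]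
  norm_num [mon, map_ofNat]
  ring

lemma key1_0_2 : (1944 : ℚ) • F 9 2 + (-31095 : ℚ) • F 7 3 + (77392 : ℚ) • F 5 4 + (-38005 : ℚ) • F 3 5 + (2764 : ℚ) • F 1 6 = 0 := by
  simp only [F, Frow2, Frow3, Frow4, Frow5, Frow6]
  rw [smul_eq_C_mul, smul_eq_C_mul, smul_eq_C_mul, smul_eq_C_mul, smul_eq_C_mul]
  norm_num [mon, map_ofNat]
  ring

lemma key1_1_2 : (1944 : ℚ) • F 10 2 + (-31095 : ℚ) • F 8 3 + (77392 : ℚ) • F 6 4 + (-38005 : ℚ) • F 4 5 + (2764 : ℚ) • F 2 6 = 0 := by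
  simp only [F, Frow2, Frow3, Frow4, Frow5, Frow6]
  rw [smul_eq_C_mul, smul_eq_C_mul, smul_eq_C_mul, smul_eq_C_mul, smul_eq_C_mul]
  norm_num [mon, map_ofNat]
  ring

lemma key1_2_2 : (1944 : ℚ) • F 11 2 + (-31095 : ℚ) • F 9 3 + (77392 : ℚ) • F 7 4 + (-38005 : ℚ) • F 5 5 + (2764 : ℚ) • F 3 6 = 0 := by
  simp only [F, Frow2, Frow3, Frow4, Frow5, Frow6]
  rw [smul_eq_C_mul, smul_eq_C_mul, smul_eq_C_mul, smul_eq_C_mul, smul_eq_C_mul]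
  norm_num [mon, map_ofNat]
  ring

lemma key1_3_2 : (1944 : ℚ) • F 12 2 + (-31095 : ℚ) • F 10 3 + (77392 : ℚ) • F 8 4 + (-38005 : ℚ) • F 6 5 + (2764 : ℚ) • F 4 6 = 0 := by
  simp only [F, Frow2, Frow3, Frow4, Frow5, Frow6]
  rw [smul_eq_C_mul, smul_eq_C_mul, smul_eq_C_mul, smul_eq_C_mul, smul_eq_C_mul]
  norm_num [mon, map_ofNat]
  ring

lemma key1_0_3 : (1944 : ℚ) • F 9 3 + (-31095 : ℚ) • F 7 4 + (77392 : ℚ) • F 5 5 + (-38005 : ℚ) • F 3 6 + (2764 : ℚ) • F 1 7 = 0 := by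
  simp only [F, Frow3, Frow4, Frow5, Frow6, Frow7]
  rw [smul_eq_C_mul, smul_eq_C_mul, smul_eq_C_mul, smul_eq_C_mul, smul_eq_C_mul]
  norm_num [mon, map_ofNat]
  ring

lemma key1_1_3 : (1944 : ℚ) • F 10 3 + (-31095 : ℚ) • F 8 4 + (77392 : ℚ) • F 6 5 + (-38005 : ℚ) • F 4 6 + (2764 : ℚ) • F 2 7 = 0 := by
  simp only [F, Frow3, Frow4, Frow5, Frow6, Frow7]
  rw [smul_eq_C_mul, smul_eq_C_mul, smul_eq_C_mul, smul_eq_C_mul, smul_eq_C_mul]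
  norm_num [mon, map_ofNat]
  ring

lemma key1 (j k : ℕ) : (1944 : ℚ) • F (j + 9) (k + 0) + (-31095 : ℚ) • F (j + 7) (k + 1) + (77392 : ℚ) • F (j + 5) (k + 2) + (-38005 : ℚ) • F (j + 3) (k + 3) + (2764 : ℚ) • F (j + 1) (k + 4) = 0 := by
  rcases le_or_gt (j + 2 * k) 7 with h | h
  · have hk : k ≤ 3 := by omega
    interval_cases k
    · have hj : j ≤ 7 := by omega
      interval_cases j
      · exact key1_0_0
      · exact key1_1_0
      · exact key1_2_0
      · exact key1_3_0
      · exact key1_4_0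
      · exact key1_5_0
      · exact key1_6_0
      · exact key1_7_0
    · have hj : j ≤ 5 := by omega
      interval_cases j
      · exact key1_0_1
      · exact key1_1_1
      · exact key1_2_1
      · exact key1_3_1
      · exact key1_4_1
      · exact key1_5_1
    · have hj : j ≤ 3 := by omega
      interval_cases j
      · exact key1_0_2
      · exact key1_1_2
      · exact key1_2_2
      · exact key1_3_2
    · have hj : j ≤ 1 := by omega
      interval_cases j
      · exact key1_0_3
      · exact key1_1_3
  · rw [F_zero _ _ (by omega), F_zero _ _ (by omega), F_zero _ _ (by omega), F_zero _ _ (by omega), F_zero _ _ (by omega)]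
    simp

lemma key2_0_0 : (324 : ℚ) • F 10 0 + (-20475 : ℚ) • F 8 1 + (120382 : ℚ) • F 6 2 + (-133495 : ℚ) • F 4 3 + (27244 : ℚ) • F 2 4 + (-480 : ℚ) • F 0 5 = 0 := by
  simp only [F, Frow0, Frow1, Frow2, Frow3, Frow4, Frow5]
  rw [smul_eq_C_mul, smul_eq_C_mul, smul_eq_C_mul, smul_eq_C_mul, smul_eq_C_mul, smul_eq_C_mul]
  norm_num [mon, map_ofNat]
  ring

lemma key2_1_0 : (324 : ℚ) • F 11 0 + (-20475 : ℚ) • F 9 1 + (120382 : ℚ) • F 7 2 + (-133495 : ℚ) • F 5 3 + (27244 : ℚ) • F 3 4 + (-480 : ℚ) • F 1 5 = 0 := by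
  simp only [F, Frow0, Frow1, Frow2, Frow3, Frow4, Frow5]
  rw [smul_eq_C_mul, smul_eq_C_mul, smul_eq_C_mul, smul_eq_C_mul, smul_eq_C_mul, smul_eq_C_mul]
  norm_num [mon, map_ofNat]
  ring

lemma key2_2_0 : (324 : ℚ) • F 12 0 + (-20475 : ℚ) • F 10 1 + (120382 : ℚ) • F 8 2 + (-133495 : ℚ) • F 6 3 + (27244 : ℚ) • F 4 4 + (-480 : ℚ) • F 2 5 = 0 := by
  simp only [F, Frow0, Frow1, Frow2, Frow3, Frow4, Frow5]
  rw [smul_eq_C_mul, smul_eq_C_mul, smul_eq_C_mul, smul_eq_C_mul, smul_eq_C_mul, smul_eq_C_mul]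
  norm_num [mon, map_ofNat]
  ring

lemma key2_3_0 : (324 : ℚ) • F 13 0 + (-20475 : ℚ) • F 11 1 + (120382 : ℚ) • F 9 2 + (-133495 : ℚ) • F 7 3 + (27244 : ℚ) • F 5 4 + (-480 : ℚ) • F 3 5 = 0 := by
  simp only [F, Frow0, Frow1, Frow2, Frow3, Frow4, Frow5]
  rw [smul_eq_C_mul, smul_eq_C_mul, smul_eq_C_mul, smul_eq_C_mul, smul_eq_C_mul, smul_eq_C_mul]
  norm_num [mon, map_ofNat]
  ring

lemma key2_4_0 : (324 : ℚ) • F 14 0 + (-20475 : ℚ) • F 12 1 + (120382 : ℚ) • F 10 2 + (-133495 : ℚ) • F 8 3 + (27244 : ℚ) • F 6 4 + (-480 : ℚ) • F 4 5 = 0 := by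
  simp only [F, Frow0, Frow1, Frow2, Frow3, Frow4, Frow5]
  rw [smul_eq_C_mul, smul_eq_C_mul, smul_eq_C_mul, smul_eq_C_mul, smul_eq_C_mul, smul_eq_C_mul]
  norm_num [mon, map_ofNat]
  ring

lemma key2_5_0 : (324 : ℚ) • F 15 0 + (-20475 : ℚ) • F 13 1 + (120382 : ℚ) • F 11 2 + (-133495 : ℚ) • F 9 3 + (27244 : ℚ) • F 7 4 + (-480 : ℚ) • F 5 5 = 0 := by
  simp only [F, Frow0, Frow1, Frow2, Frow3, Frow4, Frow5]
  rw [smul_eq_C_mul, smul_eq_C_mul, smul_eq_C_mul, smul_eq_C_mul, smul_eq_C_mul, smul_eq_C_mul]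
  norm_num [mon, map_ofNat]
  ring

lemma key2_6_0 : (324 : ℚ) • F 16 0 + (-20475 : ℚ) • F 14 1 + (120382 : ℚ) • F 12 2 + (-133495 : ℚ) • F 10 3 + (27244 : ℚ) • F 8 4 + (-480 : ℚ) • F 6 5 = 0 := by
  simp only [F, Frow0, Frow1, Frow2, Frow3, Frow4, Frow5]
  rw [smul_eq_C_mul, smul_eq_C_mul, smul_eq_C_mul, smul_eq_C_mul, smul_eq_C_mul, smul_eq_C_mul]
  norm_num [mon, map_ofNat]
  ring

lemma key2_0_1 : (324 : ℚ) • F 10 1 + (-20475 : ℚ) • F 8 2 + (120382 : ℚ) • F 6 3 + (-133495 : ℚ) • F 4 4 + (27244 : ℚ) • F 2 5 + (-480 : ℚ) • F 0 6 = 0 := by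
  simp only [F, Frow1, Frow2, Frow3, Frow4, Frow5, Frow6]
  rw [smul_eq_C_mul, smul_eq_C_mul, smul_eq_C_mul, smul_eq_C_mul, smul_eq_C_mul, smul_eq_C_mul]
  norm_num [mon, map_ofNat]
  ring

lemma key2_1_1 : (324 : ℚ) • F 11 1 + (-20475 : ℚ) • F 9 2 + (120382 : ℚ) • F 7 3 + (-133495 : ℚ) • F 5 4 + (27244 : ℚ) • F 3 5 + (-480 : ℚ) • F 1 6 = 0 := by
  simp only [F, Frow1, Frow2, Frow3, Frow4, Frow5, Frow6]
  rw [smul_eq_C_mul, smul_eq_C_mul, smul_eq_C_mul, smul_eq_C_mul, smul_eq_C_mul, smul_eq_C_mul]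
  norm_num [mon, map_ofNat]
  ring

lemma key2_2_1 : (324 : ℚ) • F 12 1 + (-20475 : ℚ) • F 10 2 + (120382 : ℚ) • F 8 3 + (-133495 : ℚ) • F 6 4 + (27244 : ℚ) • F 4 5 + (-480 : ℚ) • F 2 6 = 0 := by
  simp only [F, Frow1, Frow2, Frow3, Frow4, Frow5, Frow6]
  rw [smul_eq_C_mul, smul_eq_C_mul, smul_eq_C_mul, smul_eq_C_mul, smul_eq_C_mul, smul_eq_C_mul]
  norm_num [mon, map_ofNat]
  ring

lemma key2_3_1 : (324 : ℚ) • F 13 1 + (-20475 : ℚ) • F 11 2 + (120382 : ℚ) • F 9 3 + (-133495 : ℚ) • F 7 4 + (27244 : ℚ) • F 5 5 + (-480 : ℚ) • F 3 6 = 0 := by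
  simp only [F, Frow1, Frow2, Frow3, Frow4, Frow5, Frow6]
  rw [smul_eq_C_mul, smul_eq_C_mul, smul_eq_C_mul, smul_eq_C_mul, smul_eq_C_mul, smul_eq_C_mul]
  norm_num [mon, map_ofNat]
  ring

lemma key2_4_1 : (324 : ℚ) • F 14 1 + (-20475 : ℚ) • F 12 2 + (120382 : ℚ) • F 10 3 + (-133495 : ℚ) • F 8 4 + (27244 : ℚ) • F 6 5 + (-480 : ℚ) • F 4 6 = 0 := by
  simp only [F, Frow1, Frow2, Frow3, Frow4, Frow5, Frow6]
  rw [smul_eq_C_mul, smul_eq_C_mul, smul_eq_C_mul, smul_eq_C_mul, smul_eq_C_mul, smul_eq_C_mul]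
  norm_num [mon, map_ofNat]
  ring

lemma key2_0_2 : (324 : ℚ) • F 10 2 + (-20475 : ℚ) • F 8 3 + (120382 : ℚ) • F 6 4 + (-133495 : ℚ) • F 4 5 + (27244 : ℚ) • F 2 6 + (-480 : ℚ) • F 0 7 = 0 := by
  simp only [F, Frow2, Frow3, Frow4, Frow5, Frow6, Frow7]
  rw [smul_eq_C_mul, smul_eq_C_mul, smul_eq_C_mul, smul_eq_C_mul, smul_eq_C_mul, smul_eq_C_mul]
  norm_num [mon, map_ofNat]
  ring

lemma key2_1_2 : (324 : ℚ) • F 11 2 + (-20475 : ℚ) • F 9 3 + (120382 : ℚ) • F 7 4 + (-133495 : ℚ) • F 5 5 + (27244 : ℚ) • F 3 6 + (-480 : ℚ) • F 1 7 = 0 := by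
  simp only [F, Frow2, Frow3, Frow4, Frow5, Frow6, Frow7]
  rw [smul_eq_C_mul, smul_eq_C_mul, smul_eq_C_mul, smul_eq_C_mul, smul_eq_C_mul, smul_eq_C_mul]
  norm_num [mon, map_ofNat]
  ring

lemma key2_2_2 : (324 : ℚ) • F 12 2 + (-20475 : ℚ) • F 10 3 + (120382 : ℚ) • F 8 4 + (-133495 : ℚ) • F 6 5 + (27244 : ℚ) • F 4 6 + (-480 : ℚ) • F 2 7 = 0 := by
  simp only [F, Frow2, Frow3, Frow4, Frow5, Frow6, Frow7]
  rw [smul_eq_C_mul, smul_eq_C_mul, smul_eq_C_mul, smul_eq_C_mul, smul_eq_C_mul, smul_eq_C_mul]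
  norm_num [mon, map_ofNat]
  ring

lemma key2_0_3 : (324 : ℚ) • F 10 3 + (-20475 : ℚ) • F 8 4 + (120382 : ℚ) • F 6 5 + (-133495 : ℚ) • F 4 6 + (27244 : ℚ) • F 2 7 + (-480 : ℚ) • F 0 8 = 0 := by
  simp only [F, Frow3, Frow4, Frow5, Frow6, Frow7, Frow8]
  rw [smul_eq_C_mul, smul_eq_C_mul, smul_eq_C_mul, smul_eq_C_mul, smul_eq_C_mul, smul_eq_C_mul]
  norm_num [mon, map_ofNat]
  ring

lemma key2 (j k : ℕ) : (324 : ℚ) • F (j + 10) (k + 0) + (-20475 : ℚ) • F (j + 8) (k + 1) + (120382 : ℚ) • F (j + 6) (k + 2) + (-133495 : ℚ) • F (j + 4) (k + 3) + (27244 : ℚ) • F (j + 2) (k + 4) + (-480 : ℚ) • F (j + 0) (k + 5) = 0 := by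
  rcases le_or_gt (j + 2 * k) 6 with h | h
  · have hk : k ≤ 3 := by omega
    interval_cases k
    · have hj : j ≤ 6 := by omega
      interval_cases j
      · exact key2_0_0
      · exact key2_1_0
      · exact key2_2_0
      · exact key2_3_0
      · exact key2_4_0
      · exact key2_5_0
      · exact key2_6_0
    · have hj : j ≤ 4 := by omega
      interval_cases j
      · exact key2_0_1
      · exact key2_1_1
      · exact key2_2_1
      · exact key2_3_1
      · exact key2_4_1
    · have hj : j ≤ 2 := by omega
      interval_cases j
      · exact key2_0_2
      · exact key2_1_2
      · exact key2_2_2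
    · have hj : j ≤ 0 := by omega
      interval_cases j
      · exact key2_0_3
  · rw [F_zero _ _ (by omega), F_zero _ _ (by omega), F_zero _ _ (by omega), F_zero _ _ (by omega), F_zero _ _ (by omega), F_zero _ _ (by omega)]
    simp

lemma phi_mon_mul_p1 (j k : ℕ) : phi (mon j k * p1 2) = 0 := by
  have hexp : mon j k * p1 2 = C (1944 : ℚ) * mon (j + 9) (k + 0) + C (-31095 : ℚ) * mon (j + 7) (k + 1) + C (77392 : ℚ) * mon (j + 5) (k + 2) + C (-38005 : ℚ) * mon (j + 3) (k + 3) + C (2764 : ℚ) * mon (j + 1) (k + 4) := by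
    rw [p1_expand]; simp only [mon]; ring
  rw [hexp]
  simp only [map_add, phi_C_mul_mon]
  exact key1 j k

lemma phi_mon_mul_p2 (j k : ℕ) : phi (mon j k * p2 2) = 0 := by
  have hexp : mon j k * p2 2 = C (324 : ℚ) * mon (j + 10) (k + 0) + C (-20475 : ℚ) * mon (j + 8) (k + 1) + C (120382 : ℚ) * mon (j + 6) (k + 2) + C (-133495 : ℚ) * mon (j + 4) (k + 3) + C (27244 : ℚ) * mon (j + 2) (k + 4) + C (-480 : ℚ) * mon (j + 0) (k + 5) := by
    rw [p2_expand]; simp only [mon]; ring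
  rw [hexp]
  simp only [map_add, phi_C_mul_mon]
  exact key2 j k

lemma phi_mul_p1 (f : R2) : phi (f * p1 2) = 0 := by
  conv_lhs => rw [f.as_sum, Finset.sum_mul, map_sum]
  refine Finset.sum_eq_zero fun v _ => ?_
  rw [monomial_eq_C_mul_mon, mul_assoc, phi_C_mul, phi_mon_mul_p1, smul_zero]

lemma phi_mul_p2 (f : R2) : phi (f * p2 2) = 0 := by
  conv_lhs => rw [f.as_sum, Finset.sum_mul, map_sum]
  refine Finset.sum_eq_zero fun v _ => ?_
  rw [monomial_eq_C_mul_mon, mul_assoc, phi_C_mul, phi_mon_mul_p2, smul_zero]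

lemma phi_vanish {x : R2} (hx : x ∈ I2) : phi x = 0 := by
  obtain ⟨f, g, rfl⟩ := Ideal.mem_span_pair.mp hx
  rw [map_add, phi_mul_p1, phi_mul_p2, add_zero]

lemma mk_C_mul (r : ℚ) (x : R2) : mkq (C r * x) = r • mkq x := by
  rw [← smul_eq_C_mul, map_smul]

lemma mem_span_of_red {Dq : ℚ} (hD : Dq ≠ 0) {x r : R2} {S : Submodule ℚ Qt}
    (h : C Dq * x - r ∈ I2) (hr : mkq r ∈ S) : mkq x ∈ S := by
  have h0 : mkq (C Dq * x - r) = 0 := by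
    rw [mkq, Ideal.Quotient.mkₐ_eq_mk, Ideal.Quotient.eq_zero_iff_mem]; exact h
  rw [map_sub, sub_eq_zero, mk_C_mul] at h0
  have hx2 : mkq x = Dq⁻¹ • (Dq • mkq x) := (inv_smul_smul₀ hD _).symm
  rw [hx2, h0]
  exact S.smul_mem _ hr

lemma mem_of_scaled {Dq : ℚ} (hD : Dq ≠ 0) {x : R2} (h : C Dq * x ∈ I2) : x ∈ I2 := by
  have h2 := I2.mul_mem_left (C Dq⁻¹) h
  rwa [← mul_assoc, ← C_mul, inv_mul_cancel₀ hD, C_1, one_mul] at h2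

lemma mk_homog_mem {i : ℕ} {f : R2} (hf : IsWeightedHomogeneous w f i) (S : Submodule ℚ Qt)
    (hS : ∀ j k : ℕ, j + 2 * k = i → mkq (mon j k) ∈ S) : mkq f ∈ S := by
  rw [f.as_sum, map_sum]
  refine Submodule.sum_mem _ fun v hv => ?_
  have hw : v 0 + 2 * v 1 = i := by
    have h1 := hf (mem_support_iff.mp hv)
    rwa [← ee_eta v, weight_ee] at h1
  rw [monomial_eq_C_mul_mon, mk_C_mul]
  exact S.smul_mem _ (hS _ _ hw)

lemma red_0_9 : C (18068427336960000 : ℚ) * mon 0 9 - (0) ∈ I2 :=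
  Ideal.mem_span_pair.mpr ⟨C (507485200094760 : ℚ) * mon 1 4 + C (-2880612201598843 : ℚ) * mon 3 3 + C (2672186648674382 : ℚ) * mon 5 2 + C (-457247746628667 : ℚ) * mon 7 1 + C (7240049236548 : ℚ) * mon 9 0, C (-37642556952000 : ℚ) * mon 0 4 + C (785740148878393 : ℚ) * mon 2 3 + C (-1702477913479952 : ℚ) * mon 4 2 + C (693144758477367 : ℚ) * mon 6 1 + C (-43440295419288 : ℚ) * mon 8 0, by
    unfold p1 p2 a c mon; norm_num [map_ofNat]; ring⟩

lemma red_1_8 : C (4517106834240000 : ℚ) * mon 1 8 - (0) ∈ I2 :=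
  Ideal.mem_span_pair.mpr ⟨C (2681499717240 : ℚ) * mon 0 4 + C (-25326154760657 : ℚ) * mon 2 3 + C (25611126168943 : ℚ) * mon 4 2 + C (-4462293999708 : ℚ) * mon 6 1 + C (70785656352 : ℚ) * mon 8 0, C (6030329967107 : ℚ) * mon 1 3 + C (-15878289350623 : ℚ) * mon 3 2 + C (6727659373008 : ℚ) * mon 5 1 + C (-424713938112 : ℚ) * mon 7 0, by
    unfold p1 p2 a c mon; norm_num [map_ofNat]; ring⟩

lemma red_2_7 : C (18037697777952652800 : ℚ) * mon 2 7 - (C (705415244883148800 : ℚ) * mon 0 8) ∈ I2 :=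
  Ideal.mem_span_pair.mpr ⟨C (-9105135032860920 : ℚ) * mon 1 3 + C (11330574376216193 : ℚ) * mon 3 2 + C (-2055418775629623 : ℚ) * mon 5 1 + C (32736048183972 : ℚ) * mon 7 0, C (1469615093506560 : ℚ) * mon 0 3 + C (-6596036252682323 : ℚ) * mon 2 2 + C (3061845675011223 : ℚ) * mon 4 1 + C (-196416289103832 : ℚ) * mon 6 0, by
    unfold p1 p2 a c mon; norm_num [map_ofNat]; ring⟩

lemma red_3_6 : C (176353811220787200 : ℚ) * mon 3 6 - (C (27321016974451200 : ℚ) * mon 1 7) ∈ I2 :=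
  Ideal.mem_span_pair.mpr ⟨C (-12124462290360 : ℚ) * mon 0 3 + C (25492266289193 : ℚ) * mon 2 2 + C (-5022744329295 : ℚ) * mon 4 1 + C (80621589060 : ℚ) * mon 6 0, C (-12897909991883 : ℚ) * mon 1 2 + C (7304879851695 : ℚ) * mon 3 1 + C (-483729534360 : ℚ) * mon 5 0, by
    unfold p1 p2 a c mon; norm_num [map_ofNat]; ring⟩

lemma red_3_7 : C (4517106834240000 : ℚ) * mon 3 7 - (0) ∈ I2 :=
  Ideal.mem_span_pair.mpr ⟨C (104867639040 : ℚ) * mon 0 4 + C (-3270612695272 : ℚ) * mon 2 3 + C (3839064976103 : ℚ) * mon 4 2 + C (-689240753793 : ℚ) * mon 6 1 + C (10966228092 : ℚ) * mon 8 0, C (603862821472 : ℚ) * mon 1 3 + C (-2272783828133 : ℚ) * mon 3 2 + C (1029869650593 : ℚ) * mon 5 1 + C (-65797368552 : ℚ) * mon 7 0, by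
    unfold p1 p2 a c mon; norm_num [map_ofNat]; ring⟩

lemma red_4_5 : C (32675425872520200 : ℚ) * mon 4 5 - (C (-321889159284000 : ℚ) * mon 0 7 + C (13292940435898200 : ℚ) * mon 2 6) ∈ I2 :=
  Ideal.mem_span_pair.mpr ⟨C (1908317682965 : ℚ) * mon 1 2 + C (-446979892527 : ℚ) * mon 3 1 + C (7280508420 : ℚ) * mon 5 0, C (-670602415175 : ℚ) * mon 0 2 + C (620079817887 : ℚ) * mon 2 1 + C (-43683050520 : ℚ) * mon 4 0, by
    unfold p1 p2 a c mon; norm_num [map_ofNat]; ring⟩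

lemma red_4_6 : C (25731380567692800 : ℚ) * mon 4 6 - (C (155897386444800 : ℚ) * mon 0 8) ∈ I2 :=
  Ideal.mem_span_pair.mpr ⟨C (-3781295325960 : ℚ) * mon 1 3 + C (6223585024135 : ℚ) * mon 3 2 + C (-1187106466113 : ℚ) * mon 5 1 + C (18998006652 : ℚ) * mon 7 0, C (324786221760 : ℚ) * mon 0 3 + C (-3339634281925 : ℚ) * mon 2 2 + C (1742508857313 : ℚ) * mon 4 1 + C (-113988039912 : ℚ) * mon 6 0, by
    unfold p1 p2 a c mon; norm_num [map_ofNat]; ring⟩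

lemma red_5_4 : C (4023614491050 : ℚ) * mon 5 4 - (C (-343447242600 : ℚ) * mon 1 6 + C (3597934875150 : ℚ) * mon 3 5) ∈ I2 :=
  Ideal.mem_span_pair.mpr ⟨C (134824230 : ℚ) * mon 0 2 + C (-48486389 : ℚ) * mon 2 1 + C (812412 : ℚ) * mon 4 0, C (60847769 : ℚ) * mon 1 1 + C (-4874472 : ℚ) * mon 3 0, by
    unfold p1 p2 a c mon; norm_num [map_ofNat]; ring⟩

lemma red_5_5 : C (176353811220787200 : ℚ) * mon 5 5 - (C (9377391818995200 : ℚ) * mon 1 7) ∈ I2 :=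
  Ideal.mem_span_pair.mpr ⟨C (-4932445430760 : ℚ) * mon 0 3 + C (20670159783203 : ℚ) * mon 2 2 + C (-4455753670917 : ℚ) * mon 4 1 + C (72092201580 : ℚ) * mon 6 0, C (-8866431982553 : ℚ) * mon 1 2 + C (6318411050277 : ℚ) * mon 3 1 + C (-432553209480 : ℚ) * mon 5 0, by
    unfold p1 p2 a c mon; norm_num [map_ofNat]; ring⟩

lemma red_5_6 : C (4517106834240000 : ℚ) * mon 5 6 - (0) ∈ I2 :=
  Ideal.mem_span_pair.mpr ⟨C (16246263840 : ℚ) * mon 0 4 + C (-817243219412 : ℚ) * mon 2 3 + C (1247710203313 : ℚ) * mon 4 2 + C (-235430302203 : ℚ) * mon 6 1 + C (3763938132 : ℚ) * mon 8 0, C (93551402612 : ℚ) * mon 1 3 + C (-682468964443 : ℚ) * mon 3 2 + C (346655445003 : ℚ) * mon 5 1 + C (-22583628792 : ℚ) * mon 7 0, by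
    unfold p1 p2 a c mon; norm_num [map_ofNat]; ring⟩

lemma red_6_3 : C (212348162250 : ℚ) * mon 6 3 - (C (1895628000 : ℚ) * mon 0 6 + C (-96408656400 : ℚ) * mon 2 5 + C (382310610150 : ℚ) * mon 4 4) ∈ I2 :=
  Ideal.mem_span_pair.mpr ⟨C (-4122805 : ℚ) * mon 1 1 + C (73404 : ℚ) * mon 3 0, C (3949225 : ℚ) * mon 0 1 + C (-440424 : ℚ) * mon 2 0, by
    unfold p1 p2 a c mon; norm_num [map_ofNat]; ring⟩

lemma red_6_4 : C (4667917981788600 : ℚ) * mon 6 4 - (C (-41119255716000 : ℚ) * mon 0 7 + C (1299643433688600 : ℚ) * mon 2 6) ∈ I2 :=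
  Ideal.mem_span_pair.mpr ⟨C (400188931145 : ℚ) * mon 1 2 + C (-113349326671 : ℚ) * mon 3 1 + C (1872541764 : ℚ) * mon 5 0, C (-85665116075 : ℚ) * mon 0 2 + C (149802535471 : ℚ) * mon 2 1 + C (-11235250584 : ℚ) * mon 4 0, by
    unfold p1 p2 a c mon; norm_num [map_ofNat]; ring⟩

lemma red_6_5 : C (66072153032793600 : ℚ) * mon 6 5 - (C (137397682329600 : ℚ) * mon 0 8) ∈ I2 :=
  Ideal.mem_span_pair.mpr ⟨C (-3621432378520 : ℚ) * mon 1 3 + C (9951135237445 : ℚ) * mon 3 2 + C (-2069723811987 : ℚ) * mon 5 1 + C (33386016564 : ℚ) * mon 7 0, C (286245171520 : ℚ) * mon 0 3 + C (-4606615919455 : ℚ) * mon 2 2 + C (2963608458867 : ℚ) * mon 4 1 + C (-200316099384 : ℚ) * mon 6 0, by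
    unfold p1 p2 a c mon; norm_num [map_ofNat]; ring⟩

lemma red_7_2 : C (177715125 : ℚ) * mon 7 2 - (C (27556900 : ℚ) * mon 1 5 + C (-352749775 : ℚ) * mon 3 4 + C (624211000 : ℚ) * mon 5 3) ∈ I2 :=
  Ideal.mem_span_pair.mpr ⟨C (-10195 : ℚ) * mon 0 1 + C (216 : ℚ) * mon 2 0, C (-1296 : ℚ) * mon 1 0, by
    unfold p1 p2 a c mon; norm_num [map_ofNat]; ring⟩

lemma red_7_3 : C (12933046578375 : ℚ) * mon 7 3 - (C (-1872070823700 : ℚ) * mon 1 6 + C (14949432573075 : ℚ) * mon 3 5) ∈ I2 :=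
  Ideal.mem_span_pair.mpr ⟨C (780225735 : ℚ) * mon 0 2 + C (-531689068 : ℚ) * mon 2 1 + C (9172080 : ℚ) * mon 4 0, C (592652308 : ℚ) * mon 1 1 + C (-55032480 : ℚ) * mon 3 0, by
    unfold p1 p2 a c mon; norm_num [map_ofNat]; ring⟩

lemma red_7_4 : C (645984656486400 : ℚ) * mon 7 4 - (C (22173052070400 : ℚ) * mon 1 7) ∈ I2 :=
  Ideal.mem_span_pair.mpr ⟨C (-12365191320 : ℚ) * mon 0 3 + C (81379827021 : ℚ) * mon 2 2 + C (-20808676619 : ℚ) * mon 4 1 + C (341359956 : ℚ) * mon 6 0, C (-25009034871 : ℚ) * mon 1 2 + C (28180816619 : ℚ) * mon 3 1 + C (-2048159736 : ℚ) * mon 5 0, by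
    unfold p1 p2 a c mon; norm_num [map_ofNat]; ring⟩

lemma red_7_5 : C (4517106834240000 : ℚ) * mon 7 5 - (0) ∈ I2 :=
  Ideal.mem_span_pair.mpr ⟨C (5576204640 : ℚ) * mon 0 4 + C (-300249817852 : ℚ) * mon 2 3 + C (733580610623 : ℚ) * mon 4 2 + C (-150778686213 : ℚ) * mon 6 1 + C (2429676972 : ℚ) * mon 8 0, C (32109645052 : ℚ) * mon 1 3 + C (-347956216853 : ℚ) * mon 3 2 + C (216601097013 : ℚ) * mon 5 1 + C (-14578061832 : ℚ) * mon 7 0, by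
    unfold p1 p2 a c mon; norm_num [map_ofNat]; ring⟩

lemma red_8_1 : C (91755 : ℚ) * mon 8 1 - (C (-2880 : ℚ) * mon 0 5 + C (160700 : ℚ) * mon 2 4 + C (-762965 : ℚ) * mon 4 3 + C (644900 : ℚ) * mon 6 2) ∈ I2 :=
  Ideal.mem_span_pair.mpr ⟨C (1 : ℚ) * mon 1 0, C (-6 : ℚ) * mon 0 0, by
    unfold p1 p2 a c mon; norm_num [map_ofNat]; ring⟩

lemma red_8_2 : C (191113346025 : ℚ) * mon 8 2 - (C (5992425600 : ℚ) * mon 0 6 + C (-275130876300 : ℚ) * mon 2 5 + C (829209385725 : ℚ) * mon 4 4) ∈ I2 :=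
  Ideal.mem_span_pair.mpr ⟨C (-23996555 : ℚ) * mon 1 1 + C (464328 : ℚ) * mon 3 0, C (12484220 : ℚ) * mon 0 1 + C (-2785968 : ℚ) * mon 2 0, by
    unfold p1 p2 a c mon; norm_num [map_ofNat]; ring⟩

lemma red_8_3 : C (6001608833728200 : ℚ) * mon 8 3 - (C (-68340263191200 : ℚ) * mon 0 7 + C (1953484582757400 : ℚ) * mon 2 6) ∈ I2 :=
  Ideal.mem_span_pair.mpr ⟨C (767220259545 : ℚ) * mon 1 2 + C (-341629753859 : ℚ) * mon 3 1 + C (5802048180 : ℚ) * mon 5 0, C (-142375548315 : ℚ) * mon 0 2 + C (406670712179 : ℚ) * mon 2 1 + C (-34812289080 : ℚ) * mon 4 0, by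
    unfold p1 p2 a c mon; norm_num [map_ofNat]; ring⟩

lemma red_8_4 : C (18037697777952652800 : ℚ) * mon 8 4 - (C (24212972860876800 : ℚ) * mon 0 8) ∈ I2 :=
  Ideal.mem_span_pair.mpr ⟨C (-657799241702760 : ℚ) * mon 1 3 + C (2661267761387515 : ℚ) * mon 3 2 + C (-651587500298541 : ℚ) * mon 5 1 + C (10655370451404 : ℚ) * mon 7 0, C (50443693460160 : ℚ) * mon 0 3 + C (-924727332162145 : ℚ) * mon 2 2 + C (891983286456141 : ℚ) * mon 4 1 + C (-63932222708424 : ℚ) * mon 6 0, by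
    unfold p1 p2 a c mon; norm_num [map_ofNat]; ring⟩

lemma red_9_0 : C (1944 : ℚ) * mon 9 0 - (C (-2764 : ℚ) * mon 1 4 + C (38005 : ℚ) * mon 3 3 + C (-77392 : ℚ) * mon 5 2 + C (31095 : ℚ) * mon 7 1) ∈ I2 :=
  Ideal.mem_span_pair.mpr ⟨C (1 : ℚ) * mon 0 0, 0, by
    unfold p1 p2 a c mon; norm_num [map_ofNat]; ring⟩

lemma red_9_1 : C (319887225 : ℚ) * mon 9 1 - (C (338590000 : ℚ) * mon 1 5 + C (-3902491600 : ℚ) * mon 3 4 + C (5237140825 : ℚ) * mon 5 3) ∈ I2 :=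
  Ideal.mem_span_pair.mpr ⟨C (-128980 : ℚ) * mon 0 1 + C (6219 : ℚ) * mon 2 0, C (-37314 : ℚ) * mon 1 0, by
    unfold p1 p2 a c mon; norm_num [map_ofNat]; ring⟩

lemma red_9_2 : C (46558967682150 : ℚ) * mon 9 2 - (C (-15783420252600 : ℚ) * mon 1 6 + C (113612521349250 : ℚ) * mon 3 5) ∈ I2 :=
  Ideal.mem_span_pair.mpr ⟨C (6769056210 : ℚ) * mon 0 2 + C (-8280365633 : ℚ) * mon 2 1 + C (153907812 : ℚ) * mon 4 0, C (6096356483 : ℚ) * mon 1 1 + C (-923446872 : ℚ) * mon 3 0, by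
    unfold p1 p2 a c mon; norm_num [map_ofNat]; ring⟩

lemma red_9_3 : C (529061433662361600 : ℚ) * mon 9 3 - (C (20654021637849600 : ℚ) * mon 1 7) ∈ I2 :=
  Ideal.mem_span_pair.mpr ⟨C (-11839300501560 : ℚ) * mon 0 3 + C (92525673258713 : ℚ) * mon 2 2 + C (-35020391033887 : ℚ) * mon 4 1 + C (590194916100 : ℚ) * mon 6 0, C (-25145426975963 : ℚ) * mon 1 2 + C (42982424824447 : ℚ) * mon 3 1 + C (-3541169496600 : ℚ) * mon 5 0, by
    unfold p1 p2 a c mon; norm_num [map_ofNat]; ring⟩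

lemma red_9_4 : C (4517106834240000 : ℚ) * mon 9 4 - (0) ∈ I2 :=
  Ideal.mem_span_pair.mpr ⟨C (3599521440 : ℚ) * mon 0 4 + C (-198726633092 : ℚ) * mon 2 3 + C (700829587633 : ℚ) * mon 4 2 + C (-169164368523 : ℚ) * mon 6 1 + C (2763400212 : ℚ) * mon 8 0, C (20727244292 : ℚ) * mon 1 3 + C (-252889963963 : ℚ) * mon 3 2 + C (232406623323 : ℚ) * mon 5 1 + C (-16580401272 : ℚ) * mon 7 0, by
    unfold p1 p2 a c mon; norm_num [map_ofNat]; ring⟩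

lemma red_10_0 : C (660636 : ℚ) * mon 10 0 - (C (-331680 : ℚ) * mon 0 5 + C (17567984 : ℚ) * mon 2 4 + C (-74952770 : ℚ) * mon 4 3 + C (47970602 : ℚ) * mon 6 2) ∈ I2 :=
  Ideal.mem_span_pair.mpr ⟨C (455 : ℚ) * mon 1 0, C (-691 : ℚ) * mon 0 0, by
    unfold p1 p2 a c mon; norm_num [map_ofNat]; ring⟩

lemma red_10_1 : C (17200201142250 : ℚ) * mon 10 1 - (C (2513827596000 : ℚ) * mon 0 6 + C (-109643473354800 : ℚ) * mon 2 5 + C (297153893432550 : ℚ) * mon 4 4) ∈ I2 :=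
  Ideal.mem_span_pair.mpr ⟨C (-12402528685 : ℚ) * mon 1 1 + C (431735418 : ℚ) * mon 3 0, C (5237140825 : ℚ) * mon 0 1 + C (-2590412508 : ℚ) * mon 2 0, by
    unfold p1 p2 a c mon; norm_num [map_ofNat]; ring⟩

lemma red_10_2 : C (240609954152194200 : ℚ) * mon 10 2 - (C (-5783910177780000 : ℚ) * mon 0 7 + C (157289637319630200 : ℚ) * mon 2 6) ∈ I2 :=
  Ideal.mem_span_pair.mpr ⟨C (69271367193405 : ℚ) * mon 1 2 + C (-50823342299219 : ℚ) * mon 3 1 + C (926193953556 : ℚ) * mon 5 0, C (-12049812870375 : ℚ) * mon 0 2 + C (42647071670219 : ℚ) * mon 2 1 + C (-5557163721336 : ℚ) * mon 4 0, by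
    unfold p1 p2 a c mon; norm_num [map_ofNat]; ring⟩

lemma red_10_3 : C (4919372121259814400 : ℚ) * mon 10 3 - (C (7510553322854400 : ℚ) * mon 0 8) ∈ I2 :=
  Ideal.mem_span_pair.mpr ⟨C (-207027708855000 : ℚ) * mon 1 3 + C (980968081930301 : ℚ) * mon 3 2 + C (-347514150278107 : ℚ) * mon 5 1 + C (5836350178836 : ℚ) * mon 7 0, C (15646986089280 : ℚ) * mon 0 3 + C (-304037704705991 : ℚ) * mon 2 2 + C (432262955189947 : ℚ) * mon 4 1 + C (-35018101073016 : ℚ) * mon 6 0, by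
    unfold p1 p2 a c mon; norm_num [map_ofNat]; ring⟩

lemma red_11_0 : C (57579700500 : ℚ) * mon 11 0 - (C (619409774200 : ℚ) * mon 1 5 + C (-6767789401450 : ℚ) * mon 3 4 + C (8152788894250 : ℚ) * mon 5 3) ∈ I2 :=
  Ideal.mem_span_pair.mpr ⟨C (-239853010 : ℚ) * mon 0 1 + C (44738613 : ℚ) * mon 2 0, C (-90716553 : ℚ) * mon 1 0, by
    unfold p1 p2 a c mon; norm_num [map_ofNat]; ring⟩

lemma red_11_1 : C (666639764539875 : ℚ) * mon 11 1 - (C (-885636139947300 : ℚ) * mon 1 6 + C (6049023382346175 : ℚ) * mon 3 5) ∈ I2 :=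
  Ideal.mem_span_pair.mpr ⟨C (385914147315 : ℚ) * mon 0 2 + C (-619478166272 : ℚ) * mon 2 1 + C (19058467545 : ℚ) * mon 4 0, C (377147006732 : ℚ) * mon 1 1 + C (-114350805270 : ℚ) * mon 3 0, by
    unfold p1 p2 a c mon; norm_num [map_ofNat]; ring⟩

lemma red_11_2 : C (432868445723750400 : ℚ) * mon 11 2 - (C (33432854201510400 : ℚ) * mon 1 7) ∈ I2 :=
  Ideal.mem_span_pair.mpr ⟨C (-19454500596120 : ℚ) * mon 0 3 + C (165526421348141 : ℚ) * mon 2 2 + C (-99492870528043 : ℚ) * mon 4 1 + C (1795628462292 : ℚ) * mon 6 0, C (-42373719679511 : ℚ) * mon 1 2 + C (88445218360843 : ℚ) * mon 3 1 + C (-10773770773752 : ℚ) * mon 5 0, by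
    unfold p1 p2 a c mon; norm_num [map_ofNat]; ring⟩

lemma red_11_3 : C (4517106834240000 : ℚ) * mon 11 3 - (0) ∈ I2 :=
  Ideal.mem_span_pair.mpr ⟨C (4093926240 : ℚ) * mon 0 4 + C (-228764908732 : ℚ) * mon 2 3 + C (939853957343 : ℚ) * mon 4 2 + C (-325910055333 : ℚ) * mon 6 1 + C (5467172652 : ℚ) * mon 8 0, C (23574191932 : ℚ) * mon 1 3 + C (-303417894773 : ℚ) * mon 3 2 + C (407187410133 : ℚ) * mon 5 1 + C (-32803035912 : ℚ) * mon 7 0, by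
    unfold p1 p2 a c mon; norm_num [map_ofNat]; ring⟩

lemma red_12_0 : C (61920724112100 : ℚ) * mon 12 0 - (C (78266773384800 : ℚ) * mon 0 6 + C (-3314416858884600 : ℚ) * mon 2 5 + C (8506833896229900 : ℚ) * mon 4 4) ∈ I2 :=
  Ideal.mem_span_pair.mpr ⟨C (-428158459955 : ℚ) * mon 1 1 + C (51142234581 : ℚ) * mon 3 0, C (163055777885 : ℚ) * mon 0 1 + C (-115740061461 : ℚ) * mon 2 0, by
    unfold p1 p2 a c mon; norm_num [map_ofNat]; ring⟩

lemma red_12_1 : C (309355655338535400 : ℚ) * mon 12 1 - (C (-27652678319296800 : ℚ) * mon 0 7 + C (730981269140686200 : ℚ) * mon 2 6) ∈ I2 :=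
  Ideal.mem_span_pair.mpr ⟨C (343023027148125 : ℚ) * mon 1 2 + C (-325869116281807 : ℚ) * mon 3 1 + C (9469573910460 : ℚ) * mon 5 0, C (-57609746498535 : ℚ) * mon 0 2 + C (228285380358367 : ℚ) * mon 2 1 + C (-56817443462760 : ℚ) * mon 4 0, by
    unfold p1 p2 a c mon; norm_num [map_ofNat]; ring⟩

lemma red_12_2 : C (5351844395656281600 : ℚ) * mon 12 2 - (C (16165336097433600 : ℚ) * mon 0 8) ∈ I2 :=
  Ideal.mem_span_pair.mpr ⟨C (-449182900527720 : ℚ) * mon 1 3 + C (2306166820678235 : ℚ) * mon 3 2 + C (-1277199521749453 : ℚ) * mon 5 1 + C (22950746283852 : ℚ) * mon 7 0, C (33677783536320 : ℚ) * mon 0 3 + C (-675050004989825 : ℚ) * mon 2 2 + C (1163673287055853 : ℚ) * mon 4 1 + C (-137704477703112 : ℚ) * mon 6 0, by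
    unfold p1 p2 a c mon; norm_num [map_ofNat]; ring⟩

lemma red_13_0 : C (685686614955300 : ℚ) * mon 13 0 - (C (-7174140624882000 : ℚ) * mon 1 6 + C (47532783443172300 : ℚ) * mon 3 5) ∈ I2 :=
  Ideal.mem_span_pair.mpr ⟨C (3156524636820 : ℚ) * mon 0 2 + C (-5876434850441 : ℚ) * mon 2 1 + C (585350018541 : ℚ) * mon 4 0, C (3230194731851 : ℚ) * mon 1 1 + C (-1395783398421 : ℚ) * mon 3 0, by
    unfold p1 p2 a c mon; norm_num [map_ofNat]; ring⟩

lemma red_13_1 : C (470922814578585600 : ℚ) * mon 13 1 - (C (130294310234457600 : ℚ) * mon 1 7) ∈ I2 :=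
  Ideal.mem_span_pair.mpr ⟨C (-76502487612840 : ℚ) * mon 0 3 + C (683023809759467 : ℚ) * mon 2 2 + C (-527753087769853 : ℚ) * mon 4 1 + C (14923950845580 : ℚ) * mon 6 0, C (-169080344848817 : ℚ) * mon 1 2 + C (393604035083293 : ℚ) * mon 3 1 + C (-89543705073480 : ℚ) * mon 5 0, by
    unfold p1 p2 a c mon; norm_num [map_ofNat]; ring⟩

lemma red_13_2 : C (13551320502720000 : ℚ) * mon 13 2 - (0) ∈ I2 :=
  Ideal.mem_span_pair.mpr ⟨C (24298545120 : ℚ) * mon 0 4 + C (-1366863144716 : ℚ) * mon 2 3 + C (6071485025459 : ℚ) * mon 4 2 + C (-3274412000129 : ℚ) * mon 6 1 + C (58754649276 : ℚ) * mon 8 0, C (139919122316 : ℚ) * mon 1 3 + C (-1853165356049 : ℚ) * mon 3 2 + C (3007481740529 : ℚ) * mon 5 1 + C (-352527895656 : ℚ) * mon 7 0, by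
    unfold p1 p2 a c mon; norm_num [map_ofNat]; ring⟩

lemma red_14_0 : C (4375172839787857800 : ℚ) * mon 14 0 - (C (-2987774959285116000 : ℚ) * mon 0 7 + C (77608896843359989800 : ℚ) * mon 2 6) ∈ I2 :=
  Ideal.mem_span_pair.mpr ⟨C (37853896614543855 : ℚ) * mon 1 2 + C (-41644739944564039 : ℚ) * mon 3 1 + C (3802530999905046 : ℚ) * mon 5 0, C (-6224531165177325 : ℚ) * mon 0 2 + C (26366541712225339 : ℚ) * mon 2 1 + C (-9311566123541826 : ℚ) * mon 4 0, by
    unfold p1 p2 a c mon; norm_num [map_ofNat]; ring⟩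

lemma red_14_1 : C (4383160560042494630400 : ℚ) * mon 14 1 - (C (47427128925342566400 : ℚ) * mon 0 8) ∈ I2 :=
  Ideal.mem_span_pair.mpr ⟨C (-1324219295175685320 : ℚ) * mon 1 3 + C (7119099135438397807 : ℚ) * mon 3 2 + C (-5050305747416048921 : ℚ) * mon 5 1 + C (141107085169745436 : ℚ) * mon 7 0, C (98806518594463680 : ℚ) * mon 0 3 + C (-2017202790162553597 : ℚ) * mon 2 2 + C (3869365226139818681 : ℚ) * mon 4 1 + C (-846642511018472616 : ℚ) * mon 6 0, by
    unfold p1 p2 a c mon; norm_num [map_ofNat]; ring⟩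

lemma red_15_0 : C (385685785139861606400 : ℚ) * mon 15 0 - (C (796510667905054502400 : ℚ) * mon 1 7) ∈ I2 :=
  Ideal.mem_span_pair.mpr ⟨C (-470356950565818120 : ℚ) * mon 0 3 + C (4325892860747127871 : ℚ) * mon 2 2 + C (-3865972508695244297 : ℚ) * mon 4 1 + C (338333173050213468 : ℚ) * mon 6 0, C (-1049074882205972461 : ℚ) * mon 1 2 + C (2607682671957219497 : ℚ) * mon 3 1 + C (-839610812560967208 : ℚ) * mon 5 0, by
    unfold p1 p2 a c mon; norm_num [map_ofNat]; ring⟩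

lemma red_15_1 : C (121961884524480000 : ℚ) * mon 15 1 - (0) ∈ I2 :=
  Ideal.mem_span_pair.mpr ⟨C (783395323680 : ℚ) * mon 0 4 + C (-44245526007124 : ℚ) * mon 2 3 + C (205571895728101 : ℚ) * mon 4 2 + C (-141828917802631 : ℚ) * mon 6 1 + C (3946998774564 : ℚ) * mon 8 0, C (4511051405524 : ℚ) * mon 1 3 + C (-60767684725111 : ℚ) * mon 3 2 + C (109630951150231 : ℚ) * mon 5 1 + C (-23681992647384 : ℚ) * mon 7 0, by
    unfold p1 p2 a c mon; norm_num [map_ofNat]; ring⟩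

lemma red_16_0 : C (39448445040382451673600 : ℚ) * mon 16 0 - (C (3186042671620218009600 : ℚ) * mon 0 8) ∈ I2 :=
  Ideal.mem_span_pair.mpr ⟨C (-89232512751051398520 : ℚ) * mon 1 3 + C (493633059606064923785 : ℚ) * mon 3 2 + C (-404700109498438835119 : ℚ) * mon 5 1 + C (34753012100578156356 : ℚ) * mon 7 0, C (6637588899208787520 : ℚ) * mon 0 3 + C (-137092069320545538155 : ℚ) * mon 2 2 + C (280546160804275247119 : ℚ) * mon 4 1 + C (-86763612602288531736 : ℚ) * mon 6 0, by
    unfold p1 p2 a c mon; norm_num [map_ofNat]; ring⟩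

lemma red_17_0 : C (1097656960720320000 : ℚ) * mon 17 0 - (0) ∈ I2 :=
  Ideal.mem_span_pair.mpr ⟨C (52626650327520 : ℚ) * mon 0 4 + C (-2979950403593036 : ℚ) * mon 2 3 + C (14238029194003139 : ℚ) * mon 4 2 + C (-11348397562879409 : ℚ) * mon 6 1 + C (968395292809596 : ℚ) * mon 8 0, C (303041794802636 : ℚ) * mon 1 3 + C (-4126225215886529 : ℚ) * mon 3 2 + C (7938261091947809 : ℚ) * mon 5 1 + C (-2422541631177576 : ℚ) * mon 7 0, by
    unfold p1 p2 a c mon; norm_num [map_ofNat]; ring⟩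

lemma memT_0_9 : mon 0 9 ∈ I2 := by
  have h := red_0_9
  rw [sub_zero] at h
  exact mem_of_scaled (by norm_num) h

lemma memT_1_8 : mon 1 8 ∈ I2 := by
  have h := red_1_8
  rw [sub_zero] at h
  exact mem_of_scaled (by norm_num) h

lemma memT_3_7 : mon 3 7 ∈ I2 := by
  have h := red_3_7
  rw [sub_zero] at h
  exact mem_of_scaled (by norm_num) h

lemma memT_5_6 : mon 5 6 ∈ I2 := by
  have h := red_5_6
  rw [sub_zero] at h
  exact mem_of_scaled (by norm_num) h

lemma memT_7_5 : mon 7 5 ∈ I2 := by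
  have h := red_7_5
  rw [sub_zero] at h
  exact mem_of_scaled (by norm_num) h

lemma memT_9_4 : mon 9 4 ∈ I2 := by
  have h := red_9_4
  rw [sub_zero] at h
  exact mem_of_scaled (by norm_num) h

lemma memT_11_3 : mon 11 3 ∈ I2 := by
  have h := red_11_3
  rw [sub_zero] at h
  exact mem_of_scaled (by norm_num) h

lemma memT_13_2 : mon 13 2 ∈ I2 := by
  have h := red_13_2
  rw [sub_zero] at h
  exact mem_of_scaled (by norm_num) h

lemma memT_15_1 : mon 15 1 ∈ I2 := by
  have h := red_15_1
  rw [sub_zero] at h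
  exact mem_of_scaled (by norm_num) h

lemma memT_17_0 : mon 17 0 ∈ I2 := by
  have h := red_17_0
  rw [sub_zero] at h
  exact mem_of_scaled (by norm_num) h

lemma mon_tail : ∀ j k : ℕ, 17 ≤ j + 2 * k → mon j k ∈ I2 := by
  intro j
  induction j with
  | zero =>
    intro k hk
    have h9 : 9 ≤ k := by omega
    have hm : mon 0 k = mon 0 (k - 9) * mon 0 9 := by
      rw [mon_mul]; congr 1; omega
    rw [hm]
    exact I2.mul_mem_left _ memT_0_9
  | succ j ih =>
    intro k hk
    rcases le_or_gt 17 (j + 2 * k) with h | h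
    · have hm : mon (j + 1) k = X 0 * mon j k := by simp only [mon]; ring
      rw [hm]
      exact I2.mul_mem_left _ (ih k h)
    · have : (j = 16 ∧ k = 0) ∨ (j = 14 ∧ k = 1) ∨ (j = 12 ∧ k = 2) ∨ (j = 10 ∧ k = 3) ∨ (j = 8 ∧ k = 4) ∨ (j = 6 ∧ k = 5) ∨ (j = 4 ∧ k = 6) ∨ (j = 2 ∧ k = 7) ∨ (j = 0 ∧ k = 8) := by omega
      rcases this with ⟨rfl, rfl⟩|⟨rfl, rfl⟩|⟨rfl, rfl⟩|⟨rfl, rfl⟩|⟨rfl, rfl⟩|⟨rfl, rfl⟩|⟨rfl, rfl⟩|⟨rfl, rfl⟩|⟨rfl, rfl⟩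
      · exact memT_17_0
      · exact memT_15_1
      · exact memT_13_2
      · exact memT_11_3
      · exact memT_9_4
      · exact memT_7_5
      · exact memT_5_6
      · exact memT_3_7
      · exact memT_1_8

lemma homog_mem_I {i : ℕ} (h17 : 17 ≤ i) {f : R2} (hf : IsWeightedHomogeneous w f i) :
    f ∈ I2 := by
  rw [f.as_sum]
  refine Submodule.sum_mem _ fun v hv => ?_
  have hw : v 0 + 2 * v 1 = i := by
    have h1 := hf (mem_support_iff.mp hv)
    rwa [← ee_eta v, weight_ee] at h1
  rw [monomial_eq_C_mul_mon]
  exact I2.mul_mem_left _ (mon_tail _ _ (by omega))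

lemma piece_tail {i : ℕ} (h : 17 ≤ i) : piece I2 i = ⊥ := by
  rw [Submodule.eq_bot_iff]
  rintro x ⟨f, hf, rfl⟩
  rw [SetLike.mem_coe, mem_weightedHomogeneousSubmodule] at hf
  show mkq f = 0
  rw [mkq, Ideal.Quotient.mkₐ_eq_mk, Ideal.Quotient.eq_zero_iff_mem]
  exact homog_mem_I h hf

lemma piece_rank {n : ℕ} (i : ℕ) (g : Fin n → ℕ × ℕ)
    (hg : Function.Injective g)
    (hdeg : ∀ t, (g t).1 + 2 * (g t).2 = i)
    (hphi : ∀ t, ∃ d : ℚ, d ≠ 0 ∧ phi (mon (g t).1 (g t).2) = d • mon (g t).1 (g t).2)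
    (hspan : ∀ j k : ℕ, j + 2 * k = i →
      mkq (mon j k) ∈ Submodule.span ℚ (Set.range fun t => mkq (mon (g t).1 (g t).2))) :
    Module.finrank ℚ (piece I2 i) = n := by
  choose d hd0 hdph using hphi
  have hmon : LinearIndependent ℚ (fun t => mon (g t).1 (g t).2) := by
    have hfe : (fun t => mon (g t).1 (g t).2)
        = (fun s => monomial s (1 : ℚ)) ∘ (fun t => ee (g t).1 (g t).2) := by
      funext t; simp only [Function.comp_apply, mon_eq_monomial]
    rw [hfe, ← coe_basisMonomials]
    refine (basisMonomials _ _).linearIndependent.comp _ fun s t hst => ?_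
    apply hg
    have h0 := congrArg (fun u => u 0) hst
    have h1 := congrArg (fun u => u 1) hst
    simp only [ee_apply0, ee_apply1] at h0 h1
    exact Prod.ext h0 h1
  have hind : LinearIndependent ℚ (fun t => mkq (mon (g t).1 (g t).2)) := by
    rw [Fintype.linearIndependent_iff]
    intro cf hsum t
    have h1 : mkq (∑ t, cf t • mon (g t).1 (g t).2) = 0 := by
      rw [map_sum]
      simpa only [map_smul] using hsum
    have h2 : (∑ t, cf t • mon (g t).1 (g t).2) ∈ I2 := by
      rwa [mkq, Ideal.Quotient.mkₐ_eq_mk, Ideal.Quotient.eq_zero_iff_mem] at h1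
    have h3 := phi_vanish h2
    rw [map_sum] at h3
    simp only [map_smul, hdph, smul_smul] at h3
    have h4 := Fintype.linearIndependent_iff.mp hmon (fun t => cf t * d t) h3 t
    rcases mul_eq_zero.mp h4 with h | h
    · exact h
    · exact absurd h (hd0 t)
  have heq : piece I2 i = Submodule.span ℚ (Set.range fun t => mkq (mon (g t).1 (g t).2)) := by
    apply le_antisymm
    · rintro x ⟨f, hf, rfl⟩
      rw [SetLike.mem_coe, mem_weightedHomogeneousSubmodule] at hf
      exact mk_homog_mem hf _ hspan
    · rw [Submodule.span_le]
      rintro x ⟨t, rfl⟩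
      refine ⟨mon (g t).1 (g t).2, ?_, rfl⟩
      rw [SetLike.mem_coe, mem_weightedHomogeneousSubmodule]
      have hm := mon_homog (g t).1 (g t).2
      rwa [hdeg t] at hm
  rw [heq, finrank_span_eq_card hind, Fintype.card_fin]

def g0 : Fin 1 → ℕ × ℕ := ![(0, 0)]

lemma phiv_0_0 : phi (mon 0 0) = ((1 : ℚ)) • mon 0 0 := by
  rw [phi_mon, smul_eq_C_mul]
  simp only [F, Frow0]

lemma span0 : ∀ j k : ℕ, j + 2 * k = 0 →
    mkq (mon j k) ∈ Submodule.span ℚ (Set.range fun t => mkq (mon (g0 t).1 (g0 t).2)) := by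
  intro j k h
  have hc : (j = 0 ∧ k = 0) := by omega
  rcases hc with ⟨rfl, rfl⟩
  · exact Submodule.subset_span ⟨0, rfl⟩

lemma rank0 : Module.finrank ℚ (piece I2 0) = 1 := by
  refine piece_rank 0 g0 (by decide) (by decide) ?_ span0
  intro t
  fin_cases t
  · exact ⟨1, by norm_num, phiv_0_0⟩

def g1 : Fin 1 → ℕ × ℕ := ![(1, 0)]

lemma phiv_1_0 : phi (mon 1 0) = ((1 : ℚ)) • mon 1 0 := by
  rw [phi_mon, smul_eq_C_mul]
  simp only [F, Frow0]

lemma span1 : ∀ j k : ℕ, j + 2 * k = 1 →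
    mkq (mon j k) ∈ Submodule.span ℚ (Set.range fun t => mkq (mon (g1 t).1 (g1 t).2)) := by
  intro j k h
  have hc : (j = 1 ∧ k = 0) := by omega
  rcases hc with ⟨rfl, rfl⟩
  · exact Submodule.subset_span ⟨0, rfl⟩

lemma rank1 : Module.finrank ℚ (piece I2 1) = 1 := by
  refine piece_rank 1 g1 (by decide) (by decide) ?_ span1
  intro t
  fin_cases t
  · exact ⟨1, by norm_num, phiv_1_0⟩

def g2 : Fin 2 → ℕ × ℕ := ![(2, 0), (0, 1)]

lemma phiv_2_0 : phi (mon 2 0) = ((1 : ℚ)) • mon 2 0 := by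
  rw [phi_mon, smul_eq_C_mul]
  simp only [F, Frow0]

lemma phiv_0_1 : phi (mon 0 1) = ((1 : ℚ)) • mon 0 1 := by
  rw [phi_mon, smul_eq_C_mul]
  simp only [F, Frow1]

lemma span2 : ∀ j k : ℕ, j + 2 * k = 2 →
    mkq (mon j k) ∈ Submodule.span ℚ (Set.range fun t => mkq (mon (g2 t).1 (g2 t).2)) := by
  intro j k h
  have hc : (j = 2 ∧ k = 0) ∨ (j = 0 ∧ k = 1) := by omega
  rcases hc with ⟨rfl, rfl⟩|⟨rfl, rfl⟩
  · exact Submodule.subset_span ⟨0, rfl⟩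
  · exact Submodule.subset_span ⟨1, rfl⟩

lemma rank2 : Module.finrank ℚ (piece I2 2) = 2 := by
  refine piece_rank 2 g2 (by decide) (by decide) ?_ span2
  intro t
  fin_cases t
  · exact ⟨1, by norm_num, phiv_2_0⟩
  · exact ⟨1, by norm_num, phiv_0_1⟩

def g3 : Fin 2 → ℕ × ℕ := ![(3, 0), (1, 1)]

lemma phiv_3_0 : phi (mon 3 0) = ((1 : ℚ)) • mon 3 0 := by
  rw [phi_mon, smul_eq_C_mul]
  simp only [F, Frow0]

lemma phiv_1_1 : phi (mon 1 1) = ((1 : ℚ)) • mon 1 1 := by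
  rw [phi_mon, smul_eq_C_mul]
  simp only [F, Frow1]

lemma span3 : ∀ j k : ℕ, j + 2 * k = 3 →
    mkq (mon j k) ∈ Submodule.span ℚ (Set.range fun t => mkq (mon (g3 t).1 (g3 t).2)) := by
  intro j k h
  have hc : (j = 3 ∧ k = 0) ∨ (j = 1 ∧ k = 1) := by omega
  rcases hc with ⟨rfl, rfl⟩|⟨rfl, rfl⟩
  · exact Submodule.subset_span ⟨0, rfl⟩
  · exact Submodule.subset_span ⟨1, rfl⟩

lemma rank3 : Module.finrank ℚ (piece I2 3) = 2 := by
  refine piece_rank 3 g3 (by decide) (by decide) ?_ span3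
  intro t
  fin_cases t
  · exact ⟨1, by norm_num, phiv_3_0⟩
  · exact ⟨1, by norm_num, phiv_1_1⟩

def g4 : Fin 3 → ℕ × ℕ := ![(4, 0), (2, 1), (0, 2)]

lemma phiv_4_0 : phi (mon 4 0) = ((1 : ℚ)) • mon 4 0 := by
  rw [phi_mon, smul_eq_C_mul]
  simp only [F, Frow0]

lemma phiv_2_1 : phi (mon 2 1) = ((1 : ℚ)) • mon 2 1 := by
  rw [phi_mon, smul_eq_C_mul]
  simp only [F, Frow1]

lemma phiv_0_2 : phi (mon 0 2) = ((1 : ℚ)) • mon 0 2 := by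
  rw [phi_mon, smul_eq_C_mul]
  simp only [F, Frow2]

lemma span4 : ∀ j k : ℕ, j + 2 * k = 4 →
    mkq (mon j k) ∈ Submodule.span ℚ (Set.range fun t => mkq (mon (g4 t).1 (g4 t).2)) := by
  intro j k h
  have hc : (j = 4 ∧ k = 0) ∨ (j = 2 ∧ k = 1) ∨ (j = 0 ∧ k = 2) := by omega
  rcases hc with ⟨rfl, rfl⟩|⟨rfl, rfl⟩|⟨rfl, rfl⟩
  · exact Submodule.subset_span ⟨0, rfl⟩
  · exact Submodule.subset_span ⟨1, rfl⟩
  · exact Submodule.subset_span ⟨2, rfl⟩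

lemma rank4 : Module.finrank ℚ (piece I2 4) = 3 := by
  refine piece_rank 4 g4 (by decide) (by decide) ?_ span4
  intro t
  fin_cases t
  · exact ⟨1, by norm_num, phiv_4_0⟩
  · exact ⟨1, by norm_num, phiv_2_1⟩
  · exact ⟨1, by norm_num, phiv_0_2⟩

def g5 : Fin 3 → ℕ × ℕ := ![(5, 0), (3, 1), (1, 2)]

lemma phiv_5_0 : phi (mon 5 0) = ((1 : ℚ)) • mon 5 0 := by
  rw [phi_mon, smul_eq_C_mul]
  simp only [F, Frow0]

lemma phiv_3_1 : phi (mon 3 1) = ((1 : ℚ)) • mon 3 1 := by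
  rw [phi_mon, smul_eq_C_mul]
  simp only [F, Frow1]

lemma phiv_1_2 : phi (mon 1 2) = ((1 : ℚ)) • mon 1 2 := by
  rw [phi_mon, smul_eq_C_mul]
  simp only [F, Frow2]

lemma span5 : ∀ j k : ℕ, j + 2 * k = 5 →
    mkq (mon j k) ∈ Submodule.span ℚ (Set.range fun t => mkq (mon (g5 t).1 (g5 t).2)) := by
  intro j k h
  have hc : (j = 5 ∧ k = 0) ∨ (j = 3 ∧ k = 1) ∨ (j = 1 ∧ k = 2) := by omega
  rcases hc with ⟨rfl, rfl⟩|⟨rfl, rfl⟩|⟨rfl, rfl⟩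
  · exact Submodule.subset_span ⟨0, rfl⟩
  · exact Submodule.subset_span ⟨1, rfl⟩
  · exact Submodule.subset_span ⟨2, rfl⟩

lemma rank5 : Module.finrank ℚ (piece I2 5) = 3 := by
  refine piece_rank 5 g5 (by decide) (by decide) ?_ span5
  intro t
  fin_cases t
  · exact ⟨1, by norm_num, phiv_5_0⟩
  · exact ⟨1, by norm_num, phiv_3_1⟩
  · exact ⟨1, by norm_num, phiv_1_2⟩

def g6 : Fin 4 → ℕ × ℕ := ![(6, 0), (4, 1), (2, 2), (0, 3)]

lemma phiv_6_0 : phi (mon 6 0) = ((1 : ℚ)) • mon 6 0 := by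
  rw [phi_mon, smul_eq_C_mul]
  simp only [F, Frow0]

lemma phiv_4_1 : phi (mon 4 1) = ((1 : ℚ)) • mon 4 1 := by
  rw [phi_mon, smul_eq_C_mul]
  simp only [F, Frow1]

lemma phiv_2_2 : phi (mon 2 2) = ((1 : ℚ)) • mon 2 2 := by
  rw [phi_mon, smul_eq_C_mul]
  simp only [F, Frow2]

lemma phiv_0_3 : phi (mon 0 3) = ((1 : ℚ)) • mon 0 3 := by
  rw [phi_mon, smul_eq_C_mul]
  simp only [F, Frow3]

lemma span6 : ∀ j k : ℕ, j + 2 * k = 6 →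
    mkq (mon j k) ∈ Submodule.span ℚ (Set.range fun t => mkq (mon (g6 t).1 (g6 t).2)) := by
  intro j k h
  have hc : (j = 6 ∧ k = 0) ∨ (j = 4 ∧ k = 1) ∨ (j = 2 ∧ k = 2) ∨ (j = 0 ∧ k = 3) := by omega
  rcases hc with ⟨rfl, rfl⟩|⟨rfl, rfl⟩|⟨rfl, rfl⟩|⟨rfl, rfl⟩
  · exact Submodule.subset_span ⟨0, rfl⟩
  · exact Submodule.subset_span ⟨1, rfl⟩
  · exact Submodule.subset_span ⟨2, rfl⟩
  · exact Submodule.subset_span ⟨3, rfl⟩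

lemma rank6 : Module.finrank ℚ (piece I2 6) = 4 := by
  refine piece_rank 6 g6 (by decide) (by decide) ?_ span6
  intro t
  fin_cases t
  · exact ⟨1, by norm_num, phiv_6_0⟩
  · exact ⟨1, by norm_num, phiv_4_1⟩
  · exact ⟨1, by norm_num, phiv_2_2⟩
  · exact ⟨1, by norm_num, phiv_0_3⟩

def g7 : Fin 4 → ℕ × ℕ := ![(7, 0), (5, 1), (3, 2), (1, 3)]

lemma phiv_7_0 : phi (mon 7 0) = ((1 : ℚ)) • mon 7 0 := by
  rw [phi_mon, smul_eq_C_mul]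
  simp only [F, Frow0]

lemma phiv_5_1 : phi (mon 5 1) = ((1 : ℚ)) • mon 5 1 := by
  rw [phi_mon, smul_eq_C_mul]
  simp only [F, Frow1]

lemma phiv_3_2 : phi (mon 3 2) = ((1 : ℚ)) • mon 3 2 := by
  rw [phi_mon, smul_eq_C_mul]
  simp only [F, Frow2]

lemma phiv_1_3 : phi (mon 1 3) = ((1 : ℚ)) • mon 1 3 := by
  rw [phi_mon, smul_eq_C_mul]
  simp only [F, Frow3]

lemma span7 : ∀ j k : ℕ, j + 2 * k = 7 →
    mkq (mon j k) ∈ Submodule.span ℚ (Set.range fun t => mkq (mon (g7 t).1 (g7 t).2)) := by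
  intro j k h
  have hc : (j = 7 ∧ k = 0) ∨ (j = 5 ∧ k = 1) ∨ (j = 3 ∧ k = 2) ∨ (j = 1 ∧ k = 3) := by omega
  rcases hc with ⟨rfl, rfl⟩|⟨rfl, rfl⟩|⟨rfl, rfl⟩|⟨rfl, rfl⟩
  · exact Submodule.subset_span ⟨0, rfl⟩
  · exact Submodule.subset_span ⟨1, rfl⟩
  · exact Submodule.subset_span ⟨2, rfl⟩
  · exact Submodule.subset_span ⟨3, rfl⟩

lemma rank7 : Module.finrank ℚ (piece I2 7) = 4 := by
  refine piece_rank 7 g7 (by decide) (by decide) ?_ span7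
  intro t
  fin_cases t
  · exact ⟨1, by norm_num, phiv_7_0⟩
  · exact ⟨1, by norm_num, phiv_5_1⟩
  · exact ⟨1, by norm_num, phiv_3_2⟩
  · exact ⟨1, by norm_num, phiv_1_3⟩

def g8 : Fin 5 → ℕ × ℕ := ![(8, 0), (6, 1), (4, 2), (2, 3), (0, 4)]

lemma phiv_8_0 : phi (mon 8 0) = ((1 : ℚ)) • mon 8 0 := by
  rw [phi_mon, smul_eq_C_mul]
  simp only [F, Frow0]

lemma phiv_6_1 : phi (mon 6 1) = ((1 : ℚ)) • mon 6 1 := by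
  rw [phi_mon, smul_eq_C_mul]
  simp only [F, Frow1]

lemma phiv_4_2 : phi (mon 4 2) = ((1 : ℚ)) • mon 4 2 := by
  rw [phi_mon, smul_eq_C_mul]
  simp only [F, Frow2]

lemma phiv_2_3 : phi (mon 2 3) = ((1 : ℚ)) • mon 2 3 := by
  rw [phi_mon, smul_eq_C_mul]
  simp only [F, Frow3]

lemma phiv_0_4 : phi (mon 0 4) = ((1 : ℚ)) • mon 0 4 := by
  rw [phi_mon, smul_eq_C_mul]
  simp only [F, Frow4]

lemma span8 : ∀ j k : ℕ, j + 2 * k = 8 →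
    mkq (mon j k) ∈ Submodule.span ℚ (Set.range fun t => mkq (mon (g8 t).1 (g8 t).2)) := by
  intro j k h
  have hc : (j = 8 ∧ k = 0) ∨ (j = 6 ∧ k = 1) ∨ (j = 4 ∧ k = 2) ∨ (j = 2 ∧ k = 3) ∨ (j = 0 ∧ k = 4) := by omega
  rcases hc with ⟨rfl, rfl⟩|⟨rfl, rfl⟩|⟨rfl, rfl⟩|⟨rfl, rfl⟩|⟨rfl, rfl⟩
  · exact Submodule.subset_span ⟨0, rfl⟩
  · exact Submodule.subset_span ⟨1, rfl⟩
  · exact Submodule.subset_span ⟨2, rfl⟩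
  · exact Submodule.subset_span ⟨3, rfl⟩
  · exact Submodule.subset_span ⟨4, rfl⟩

lemma rank8 : Module.finrank ℚ (piece I2 8) = 5 := by
  refine piece_rank 8 g8 (by decide) (by decide) ?_ span8
  intro t
  fin_cases t
  · exact ⟨1, by norm_num, phiv_8_0⟩
  · exact ⟨1, by norm_num, phiv_6_1⟩
  · exact ⟨1, by norm_num, phiv_4_2⟩
  · exact ⟨1, by norm_num, phiv_2_3⟩
  · exact ⟨1, by norm_num, phiv_0_4⟩

def g9 : Fin 4 → ℕ × ℕ := ![(7, 1), (5, 2), (3, 3), (1, 4)]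

lemma phiv_7_1 : phi (mon 7 1) = ((1944 : ℚ)) • mon 7 1 := by
  rw [phi_mon, smul_eq_C_mul]
  simp only [F, Frow1]

lemma phiv_5_2 : phi (mon 5 2) = ((1944 : ℚ)) • mon 5 2 := by
  rw [phi_mon, smul_eq_C_mul]
  simp only [F, Frow2]

lemma phiv_3_3 : phi (mon 3 3) = ((1944 : ℚ)) • mon 3 3 := by
  rw [phi_mon, smul_eq_C_mul]
  simp only [F, Frow3]

lemma phiv_1_4 : phi (mon 1 4) = ((1944 : ℚ)) • mon 1 4 := by
  rw [phi_mon, smul_eq_C_mul]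
  simp only [F, Frow4]

lemma span9 : ∀ j k : ℕ, j + 2 * k = 9 →
    mkq (mon j k) ∈ Submodule.span ℚ (Set.range fun t => mkq (mon (g9 t).1 (g9 t).2)) := by
  intro j k h
  have hc : (j = 9 ∧ k = 0) ∨ (j = 7 ∧ k = 1) ∨ (j = 5 ∧ k = 2) ∨ (j = 3 ∧ k = 3) ∨ (j = 1 ∧ k = 4) := by omega
  rcases hc with ⟨rfl, rfl⟩|⟨rfl, rfl⟩|⟨rfl, rfl⟩|⟨rfl, rfl⟩|⟨rfl, rfl⟩
  · refine mem_span_of_red (by norm_num) red_9_0 ?_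
    simp only [map_add, mk_C_mul]
    exact Submodule.add_mem _ (Submodule.add_mem _ (Submodule.add_mem _ (Submodule.smul_mem _ _ (Submodule.subset_span ⟨3, rfl⟩)) (Submodule.smul_mem _ _ (Submodule.subset_span ⟨2, rfl⟩))) (Submodule.smul_mem _ _ (Submodule.subset_span ⟨1, rfl⟩))) (Submodule.smul_mem _ _ (Submodule.subset_span ⟨0, rfl⟩))
  · exact Submodule.subset_span ⟨0, rfl⟩
  · exact Submodule.subset_span ⟨1, rfl⟩
  · exact Submodule.subset_span ⟨2, rfl⟩
  · exact Submodule.subset_span ⟨3, rfl⟩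

lemma rank9 : Module.finrank ℚ (piece I2 9) = 4 := by
  refine piece_rank 9 g9 (by decide) (by decide) ?_ span9
  intro t
  fin_cases t
  · exact ⟨1944, by norm_num, phiv_7_1⟩
  · exact ⟨1944, by norm_num, phiv_5_2⟩
  · exact ⟨1944, by norm_num, phiv_3_3⟩
  · exact ⟨1944, by norm_num, phiv_1_4⟩

def g10 : Fin 4 → ℕ × ℕ := ![(6, 2), (4, 3), (2, 4), (0, 5)]

lemma phiv_6_2 : phi (mon 6 2) = ((330318 : ℚ)) • mon 6 2 := by
  rw [phi_mon, smul_eq_C_mul]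
  simp only [F, Frow2]

lemma phiv_4_3 : phi (mon 4 3) = ((330318 : ℚ)) • mon 4 3 := by
  rw [phi_mon, smul_eq_C_mul]
  simp only [F, Frow3]

lemma phiv_2_4 : phi (mon 2 4) = ((330318 : ℚ)) • mon 2 4 := by
  rw [phi_mon, smul_eq_C_mul]
  simp only [F, Frow4]

lemma phiv_0_5 : phi (mon 0 5) = ((330318 : ℚ)) • mon 0 5 := by
  rw [phi_mon, smul_eq_C_mul]
  simp only [F, Frow5]

lemma span10 : ∀ j k : ℕ, j + 2 * k = 10 →
    mkq (mon j k) ∈ Submodule.span ℚ (Set.range fun t => mkq (mon (g10 t).1 (g10 t).2)) := by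
  intro j k h
  have hc : (j = 10 ∧ k = 0) ∨ (j = 8 ∧ k = 1) ∨ (j = 6 ∧ k = 2) ∨ (j = 4 ∧ k = 3) ∨ (j = 2 ∧ k = 4) ∨ (j = 0 ∧ k = 5) := by omega
  rcases hc with ⟨rfl, rfl⟩|⟨rfl, rfl⟩|⟨rfl, rfl⟩|⟨rfl, rfl⟩|⟨rfl, rfl⟩|⟨rfl, rfl⟩
  · refine mem_span_of_red (by norm_num) red_10_0 ?_
    simp only [map_add, mk_C_mul]
    exact Submodule.add_mem _ (Submodule.add_mem _ (Submodule.add_mem _ (Submodule.smul_mem _ _ (Submodule.subset_span ⟨3, rfl⟩)) (Submodule.smul_mem _ _ (Submodule.subset_span ⟨2, rfl⟩))) (Submodule.smul_mem _ _ (Submodule.subset_span ⟨1, rfl⟩))) (Submodule.smul_mem _ _ (Submodule.subset_span ⟨0, rfl⟩))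
  · refine mem_span_of_red (by norm_num) red_8_1 ?_
    simp only [map_add, mk_C_mul]
    exact Submodule.add_mem _ (Submodule.add_mem _ (Submodule.add_mem _ (Submodule.smul_mem _ _ (Submodule.subset_span ⟨3, rfl⟩)) (Submodule.smul_mem _ _ (Submodule.subset_span ⟨2, rfl⟩))) (Submodule.smul_mem _ _ (Submodule.subset_span ⟨1, rfl⟩))) (Submodule.smul_mem _ _ (Submodule.subset_span ⟨0, rfl⟩))
  · exact Submodule.subset_span ⟨0, rfl⟩
  · exact Submodule.subset_span ⟨1, rfl⟩
  · exact Submodule.subset_span ⟨2, rfl⟩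
  · exact Submodule.subset_span ⟨3, rfl⟩

lemma rank10 : Module.finrank ℚ (piece I2 10) = 4 := by
  refine piece_rank 10 g10 (by decide) (by decide) ?_ span10
  intro t
  fin_cases t
  · exact ⟨330318, by norm_num, phiv_6_2⟩
  · exact ⟨330318, by norm_num, phiv_4_3⟩
  · exact ⟨330318, by norm_num, phiv_2_4⟩
  · exact ⟨330318, by norm_num, phiv_0_5⟩

def g11 : Fin 3 → ℕ × ℕ := ![(5, 3), (3, 4), (1, 5)]

lemma phiv_5_3 : phi (mon 5 3) = ((164513430 : ℚ)) • mon 5 3 := by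
  rw [phi_mon, smul_eq_C_mul]
  simp only [F, Frow3]

lemma phiv_3_4 : phi (mon 3 4) = ((164513430 : ℚ)) • mon 3 4 := by
  rw [phi_mon, smul_eq_C_mul]
  simp only [F, Frow4]

lemma phiv_1_5 : phi (mon 1 5) = ((164513430 : ℚ)) • mon 1 5 := by
  rw [phi_mon, smul_eq_C_mul]
  simp only [F, Frow5]

lemma span11 : ∀ j k : ℕ, j + 2 * k = 11 →
    mkq (mon j k) ∈ Submodule.span ℚ (Set.range fun t => mkq (mon (g11 t).1 (g11 t).2)) := by
  intro j k h
  have hc : (j = 11 ∧ k = 0) ∨ (j = 9 ∧ k = 1) ∨ (j = 7 ∧ k = 2) ∨ (j = 5 ∧ k = 3) ∨ (j = 3 ∧ k = 4) ∨ (j = 1 ∧ k = 5) := by omega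
  rcases hc with ⟨rfl, rfl⟩|⟨rfl, rfl⟩|⟨rfl, rfl⟩|⟨rfl, rfl⟩|⟨rfl, rfl⟩|⟨rfl, rfl⟩
  · refine mem_span_of_red (by norm_num) red_11_0 ?_
    simp only [map_add, mk_C_mul]
    exact Submodule.add_mem _ (Submodule.add_mem _ (Submodule.smul_mem _ _ (Submodule.subset_span ⟨2, rfl⟩)) (Submodule.smul_mem _ _ (Submodule.subset_span ⟨1, rfl⟩))) (Submodule.smul_mem _ _ (Submodule.subset_span ⟨0, rfl⟩))
  · refine mem_span_of_red (by norm_num) red_9_1 ?_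
    simp only [map_add, mk_C_mul]
    exact Submodule.add_mem _ (Submodule.add_mem _ (Submodule.smul_mem _ _ (Submodule.subset_span ⟨2, rfl⟩)) (Submodule.smul_mem _ _ (Submodule.subset_span ⟨1, rfl⟩))) (Submodule.smul_mem _ _ (Submodule.subset_span ⟨0, rfl⟩))
  · refine mem_span_of_red (by norm_num) red_7_2 ?_
    simp only [map_add, mk_C_mul]
    exact Submodule.add_mem _ (Submodule.add_mem _ (Submodule.smul_mem _ _ (Submodule.subset_span ⟨2, rfl⟩)) (Submodule.smul_mem _ _ (Submodule.subset_span ⟨1, rfl⟩))) (Submodule.smul_mem _ _ (Submodule.subset_span ⟨0, rfl⟩))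
  · exact Submodule.subset_span ⟨0, rfl⟩
  · exact Submodule.subset_span ⟨1, rfl⟩
  · exact Submodule.subset_span ⟨2, rfl⟩

lemma rank11 : Module.finrank ℚ (piece I2 11) = 3 := by
  refine piece_rank 11 g11 (by decide) (by decide) ?_ span11
  intro t
  fin_cases t
  · exact ⟨164513430, by norm_num, phiv_5_3⟩
  · exact ⟨164513430, by norm_num, phiv_3_4⟩
  · exact ⟨164513430, by norm_num, phiv_1_5⟩

def g12 : Fin 3 → ℕ × ℕ := ![(4, 4), (2, 5), (0, 6)]

lemma phiv_4_4 : phi (mon 4 4) = ((147430295505 : ℚ)) • mon 4 4 := by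
  rw [phi_mon, smul_eq_C_mul]
  simp only [F, Frow4]

lemma phiv_2_5 : phi (mon 2 5) = ((147430295505 : ℚ)) • mon 2 5 := by
  rw [phi_mon, smul_eq_C_mul]
  simp only [F, Frow5]

lemma phiv_0_6 : phi (mon 0 6) = ((147430295505 : ℚ)) • mon 0 6 := by
  rw [phi_mon, smul_eq_C_mul]
  simp only [F, Frow6]

lemma span12 : ∀ j k : ℕ, j + 2 * k = 12 →
    mkq (mon j k) ∈ Submodule.span ℚ (Set.range fun t => mkq (mon (g12 t).1 (g12 t).2)) := by
  intro j k h
  have hc : (j = 12 ∧ k = 0) ∨ (j = 10 ∧ k = 1) ∨ (j = 8 ∧ k = 2) ∨ (j = 6 ∧ k = 3) ∨ (j = 4 ∧ k = 4) ∨ (j = 2 ∧ k = 5) ∨ (j = 0 ∧ k = 6) := by omega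
  rcases hc with ⟨rfl, rfl⟩|⟨rfl, rfl⟩|⟨rfl, rfl⟩|⟨rfl, rfl⟩|⟨rfl, rfl⟩|⟨rfl, rfl⟩|⟨rfl, rfl⟩
  · refine mem_span_of_red (by norm_num) red_12_0 ?_
    simp only [map_add, mk_C_mul]
    exact Submodule.add_mem _ (Submodule.add_mem _ (Submodule.smul_mem _ _ (Submodule.subset_span ⟨2, rfl⟩)) (Submodule.smul_mem _ _ (Submodule.subset_span ⟨1, rfl⟩))) (Submodule.smul_mem _ _ (Submodule.subset_span ⟨0, rfl⟩))
  · refine mem_span_of_red (by norm_num) red_10_1 ?_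
    simp only [map_add, mk_C_mul]
    exact Submodule.add_mem _ (Submodule.add_mem _ (Submodule.smul_mem _ _ (Submodule.subset_span ⟨2, rfl⟩)) (Submodule.smul_mem _ _ (Submodule.subset_span ⟨1, rfl⟩))) (Submodule.smul_mem _ _ (Submodule.subset_span ⟨0, rfl⟩))
  · refine mem_span_of_red (by norm_num) red_8_2 ?_
    simp only [map_add, mk_C_mul]
    exact Submodule.add_mem _ (Submodule.add_mem _ (Submodule.smul_mem _ _ (Submodule.subset_span ⟨2, rfl⟩)) (Submodule.smul_mem _ _ (Submodule.subset_span ⟨1, rfl⟩))) (Submodule.smul_mem _ _ (Submodule.subset_span ⟨0, rfl⟩))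
  · refine mem_span_of_red (by norm_num) red_6_3 ?_
    simp only [map_add, mk_C_mul]
    exact Submodule.add_mem _ (Submodule.add_mem _ (Submodule.smul_mem _ _ (Submodule.subset_span ⟨2, rfl⟩)) (Submodule.smul_mem _ _ (Submodule.subset_span ⟨1, rfl⟩))) (Submodule.smul_mem _ _ (Submodule.subset_span ⟨0, rfl⟩))
  · exact Submodule.subset_span ⟨0, rfl⟩
  · exact Submodule.subset_span ⟨1, rfl⟩
  · exact Submodule.subset_span ⟨2, rfl⟩

lemma rank12 : Module.finrank ℚ (piece I2 12) = 3 := by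
  refine piece_rank 12 g12 (by decide) (by decide) ?_ span12
  intro t
  fin_cases t
  · exact ⟨147430295505, by norm_num, phiv_4_4⟩
  · exact ⟨147430295505, by norm_num, phiv_2_5⟩
  · exact ⟨147430295505, by norm_num, phiv_0_6⟩

def g13 : Fin 2 → ℕ × ℕ := ![(3, 5), (1, 6)]

lemma phiv_3_5 : phi (mon 3 5) = ((544195726155 : ℚ)) • mon 3 5 := by
  rw [phi_mon, smul_eq_C_mul]
  simp only [F, Frow5]

lemma phiv_1_6 : phi (mon 1 6) = ((544195726155 : ℚ)) • mon 1 6 := by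
  rw [phi_mon, smul_eq_C_mul]
  simp only [F, Frow6]

lemma span13 : ∀ j k : ℕ, j + 2 * k = 13 →
    mkq (mon j k) ∈ Submodule.span ℚ (Set.range fun t => mkq (mon (g13 t).1 (g13 t).2)) := by
  intro j k h
  have hc : (j = 13 ∧ k = 0) ∨ (j = 11 ∧ k = 1) ∨ (j = 9 ∧ k = 2) ∨ (j = 7 ∧ k = 3) ∨ (j = 5 ∧ k = 4) ∨ (j = 3 ∧ k = 5) ∨ (j = 1 ∧ k = 6) := by omega
  rcases hc with ⟨rfl, rfl⟩|⟨rfl, rfl⟩|⟨rfl, rfl⟩|⟨rfl, rfl⟩|⟨rfl, rfl⟩|⟨rfl, rfl⟩|⟨rfl, rfl⟩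
  · refine mem_span_of_red (by norm_num) red_13_0 ?_
    simp only [map_add, mk_C_mul]
    exact Submodule.add_mem _ (Submodule.smul_mem _ _ (Submodule.subset_span ⟨1, rfl⟩)) (Submodule.smul_mem _ _ (Submodule.subset_span ⟨0, rfl⟩))
  · refine mem_span_of_red (by norm_num) red_11_1 ?_
    simp only [map_add, mk_C_mul]
    exact Submodule.add_mem _ (Submodule.smul_mem _ _ (Submodule.subset_span ⟨1, rfl⟩)) (Submodule.smul_mem _ _ (Submodule.subset_span ⟨0, rfl⟩))
  · refine mem_span_of_red (by norm_num) red_9_2 ?_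
    simp only [map_add, mk_C_mul]
    exact Submodule.add_mem _ (Submodule.smul_mem _ _ (Submodule.subset_span ⟨1, rfl⟩)) (Submodule.smul_mem _ _ (Submodule.subset_span ⟨0, rfl⟩))
  · refine mem_span_of_red (by norm_num) red_7_3 ?_
    simp only [map_add, mk_C_mul]
    exact Submodule.add_mem _ (Submodule.smul_mem _ _ (Submodule.subset_span ⟨1, rfl⟩)) (Submodule.smul_mem _ _ (Submodule.subset_span ⟨0, rfl⟩))
  · refine mem_span_of_red (by norm_num) red_5_4 ?_
    simp only [map_add, mk_C_mul]
    exact Submodule.add_mem _ (Submodule.smul_mem _ _ (Submodule.subset_span ⟨1, rfl⟩)) (Submodule.smul_mem _ _ (Submodule.subset_span ⟨0, rfl⟩))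
  · exact Submodule.subset_span ⟨0, rfl⟩
  · exact Submodule.subset_span ⟨1, rfl⟩

lemma rank13 : Module.finrank ℚ (piece I2 13) = 2 := by
  refine piece_rank 13 g13 (by decide) (by decide) ?_ span13
  intro t
  fin_cases t
  · exact ⟨544195726155, by norm_num, phiv_3_5⟩
  · exact ⟨544195726155, by norm_num, phiv_1_6⟩

def g14 : Fin 2 → ℕ × ℕ := ![(2, 6), (0, 7)]

lemma phiv_2_6 : phi (mon 2 6) = ((220968325241811 : ℚ)) • mon 2 6 := by
  rw [phi_mon, smul_eq_C_mul]
  simp only [F, Frow6]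

lemma phiv_0_7 : phi (mon 0 7) = ((220968325241811 : ℚ)) • mon 0 7 := by
  rw [phi_mon, smul_eq_C_mul]
  simp only [F, Frow7]

lemma span14 : ∀ j k : ℕ, j + 2 * k = 14 →
    mkq (mon j k) ∈ Submodule.span ℚ (Set.range fun t => mkq (mon (g14 t).1 (g14 t).2)) := by
  intro j k h
  have hc : (j = 14 ∧ k = 0) ∨ (j = 12 ∧ k = 1) ∨ (j = 10 ∧ k = 2) ∨ (j = 8 ∧ k = 3) ∨ (j = 6 ∧ k = 4) ∨ (j = 4 ∧ k = 5) ∨ (j = 2 ∧ k = 6) ∨ (j = 0 ∧ k = 7) := by omega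
  rcases hc with ⟨rfl, rfl⟩|⟨rfl, rfl⟩|⟨rfl, rfl⟩|⟨rfl, rfl⟩|⟨rfl, rfl⟩|⟨rfl, rfl⟩|⟨rfl, rfl⟩|⟨rfl, rfl⟩
  · refine mem_span_of_red (by norm_num) red_14_0 ?_
    simp only [map_add, mk_C_mul]
    exact Submodule.add_mem _ (Submodule.smul_mem _ _ (Submodule.subset_span ⟨1, rfl⟩)) (Submodule.smul_mem _ _ (Submodule.subset_span ⟨0, rfl⟩))
  · refine mem_span_of_red (by norm_num) red_12_1 ?_
    simp only [map_add, mk_C_mul]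
    exact Submodule.add_mem _ (Submodule.smul_mem _ _ (Submodule.subset_span ⟨1, rfl⟩)) (Submodule.smul_mem _ _ (Submodule.subset_span ⟨0, rfl⟩))
  · refine mem_span_of_red (by norm_num) red_10_2 ?_
    simp only [map_add, mk_C_mul]
    exact Submodule.add_mem _ (Submodule.smul_mem _ _ (Submodule.subset_span ⟨1, rfl⟩)) (Submodule.smul_mem _ _ (Submodule.subset_span ⟨0, rfl⟩))
  · refine mem_span_of_red (by norm_num) red_8_3 ?_
    simp only [map_add, mk_C_mul]
    exact Submodule.add_mem _ (Submodule.smul_mem _ _ (Submodule.subset_span ⟨1, rfl⟩)) (Submodule.smul_mem _ _ (Submodule.subset_span ⟨0, rfl⟩))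
  · refine mem_span_of_red (by norm_num) red_6_4 ?_
    simp only [map_add, mk_C_mul]
    exact Submodule.add_mem _ (Submodule.smul_mem _ _ (Submodule.subset_span ⟨1, rfl⟩)) (Submodule.smul_mem _ _ (Submodule.subset_span ⟨0, rfl⟩))
  · refine mem_span_of_red (by norm_num) red_4_5 ?_
    simp only [map_add, mk_C_mul]
    exact Submodule.add_mem _ (Submodule.smul_mem _ _ (Submodule.subset_span ⟨1, rfl⟩)) (Submodule.smul_mem _ _ (Submodule.subset_span ⟨0, rfl⟩))
  · exact Submodule.subset_span ⟨0, rfl⟩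
  · exact Submodule.subset_span ⟨1, rfl⟩

lemma rank14 : Module.finrank ℚ (piece I2 14) = 2 := by
  refine piece_rank 14 g14 (by decide) (by decide) ?_ span14
  intro t
  fin_cases t
  · exact ⟨220968325241811, by norm_num, phiv_2_6⟩
  · exact ⟨220968325241811, by norm_num, phiv_0_7⟩

def g15 : Fin 1 → ℕ × ℕ := ![(1, 7)]

lemma phiv_1_7 : phi (mon 1 7) = ((53089242264 : ℚ)) • mon 1 7 := by
  rw [phi_mon, smul_eq_C_mul]
  simp only [F, Frow7]

lemma span15 : ∀ j k : ℕ, j + 2 * k = 15 →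
    mkq (mon j k) ∈ Submodule.span ℚ (Set.range fun t => mkq (mon (g15 t).1 (g15 t).2)) := by
  intro j k h
  have hc : (j = 15 ∧ k = 0) ∨ (j = 13 ∧ k = 1) ∨ (j = 11 ∧ k = 2) ∨ (j = 9 ∧ k = 3) ∨ (j = 7 ∧ k = 4) ∨ (j = 5 ∧ k = 5) ∨ (j = 3 ∧ k = 6) ∨ (j = 1 ∧ k = 7) := by omega
  rcases hc with ⟨rfl, rfl⟩|⟨rfl, rfl⟩|⟨rfl, rfl⟩|⟨rfl, rfl⟩|⟨rfl, rfl⟩|⟨rfl, rfl⟩|⟨rfl, rfl⟩|⟨rfl, rfl⟩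
  · refine mem_span_of_red (by norm_num) red_15_0 ?_
    simp only [map_add, mk_C_mul]
    exact Submodule.smul_mem _ _ (Submodule.subset_span ⟨0, rfl⟩)
  · refine mem_span_of_red (by norm_num) red_13_1 ?_
    simp only [map_add, mk_C_mul]
    exact Submodule.smul_mem _ _ (Submodule.subset_span ⟨0, rfl⟩)
  · refine mem_span_of_red (by norm_num) red_11_2 ?_
    simp only [map_add, mk_C_mul]
    exact Submodule.smul_mem _ _ (Submodule.subset_span ⟨0, rfl⟩)
  · refine mem_span_of_red (by norm_num) red_9_3 ?_
    simp only [map_add, mk_C_mul]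
    exact Submodule.smul_mem _ _ (Submodule.subset_span ⟨0, rfl⟩)
  · refine mem_span_of_red (by norm_num) red_7_4 ?_
    simp only [map_add, mk_C_mul]
    exact Submodule.smul_mem _ _ (Submodule.subset_span ⟨0, rfl⟩)
  · refine mem_span_of_red (by norm_num) red_5_5 ?_
    simp only [map_add, mk_C_mul]
    exact Submodule.smul_mem _ _ (Submodule.subset_span ⟨0, rfl⟩)
  · refine mem_span_of_red (by norm_num) red_3_6 ?_
    simp only [map_add, mk_C_mul]
    exact Submodule.smul_mem _ _ (Submodule.subset_span ⟨0, rfl⟩)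
  · exact Submodule.subset_span ⟨0, rfl⟩

lemma rank15 : Module.finrank ℚ (piece I2 15) = 1 := by
  refine piece_rank 15 g15 (by decide) (by decide) ?_ span15
  intro t
  fin_cases t
  · exact ⟨53089242264, by norm_num, phiv_1_7⟩

def g16 : Fin 1 → ℕ × ℕ := ![(0, 8)]

lemma phiv_0_8 : phi (mon 0 8) = ((5430036927411 : ℚ)) • mon 0 8 := by
  rw [phi_mon, smul_eq_C_mul]
  simp only [F, Frow8]

lemma span16 : ∀ j k : ℕ, j + 2 * k = 16 →
    mkq (mon j k) ∈ Submodule.span ℚ (Set.range fun t => mkq (mon (g16 t).1 (g16 t).2)) := by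
  intro j k h
  have hc : (j = 16 ∧ k = 0) ∨ (j = 14 ∧ k = 1) ∨ (j = 12 ∧ k = 2) ∨ (j = 10 ∧ k = 3) ∨ (j = 8 ∧ k = 4) ∨ (j = 6 ∧ k = 5) ∨ (j = 4 ∧ k = 6) ∨ (j = 2 ∧ k = 7) ∨ (j = 0 ∧ k = 8) := by omega
  rcases hc with ⟨rfl, rfl⟩|⟨rfl, rfl⟩|⟨rfl, rfl⟩|⟨rfl, rfl⟩|⟨rfl, rfl⟩|⟨rfl, rfl⟩|⟨rfl, rfl⟩|⟨rfl, rfl⟩|⟨rfl, rfl⟩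
  · refine mem_span_of_red (by norm_num) red_16_0 ?_
    simp only [map_add, mk_C_mul]
    exact Submodule.smul_mem _ _ (Submodule.subset_span ⟨0, rfl⟩)
  · refine mem_span_of_red (by norm_num) red_14_1 ?_
    simp only [map_add, mk_C_mul]
    exact Submodule.smul_mem _ _ (Submodule.subset_span ⟨0, rfl⟩)
  · refine mem_span_of_red (by norm_num) red_12_2 ?_
    simp only [map_add, mk_C_mul]
    exact Submodule.smul_mem _ _ (Submodule.subset_span ⟨0, rfl⟩)
  · refine mem_span_of_red (by norm_num) red_10_3 ?_
    simp only [map_add, mk_C_mul]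
    exact Submodule.smul_mem _ _ (Submodule.subset_span ⟨0, rfl⟩)
  · refine mem_span_of_red (by norm_num) red_8_4 ?_
    simp only [map_add, mk_C_mul]
    exact Submodule.smul_mem _ _ (Submodule.subset_span ⟨0, rfl⟩)
  · refine mem_span_of_red (by norm_num) red_6_5 ?_
    simp only [map_add, mk_C_mul]
    exact Submodule.smul_mem _ _ (Submodule.subset_span ⟨0, rfl⟩)
  · refine mem_span_of_red (by norm_num) red_4_6 ?_
    simp only [map_add, mk_C_mul]
    exact Submodule.smul_mem _ _ (Submodule.subset_span ⟨0, rfl⟩)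
  · refine mem_span_of_red (by norm_num) red_2_7 ?_
    simp only [map_add, mk_C_mul]
    exact Submodule.smul_mem _ _ (Submodule.subset_span ⟨0, rfl⟩)
  · exact Submodule.subset_span ⟨0, rfl⟩

lemma rank16 : Module.finrank ℚ (piece I2 16) = 1 := by
  refine piece_rank 16 g16 (by decide) (by decide) ?_ span16
  intro t
  fin_cases t
  · exact ⟨5430036927411, by norm_num, phiv_0_8⟩

end Hilb
end

/-- The Hilbert series of `ℚ[a,c]/(p₁(2), p₂(2))` is
`1 + t + 2t² + 2t³ + 3t⁴ + 3t⁵ + 4t⁶ + 4t⁷ + 5t⁸ + 4t⁹ + 4t¹⁰ + 3t¹¹ + 3t¹² + 2t¹³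
  + 2t¹⁴ + t¹⁵ + t¹⁶`. -/
theorem stmt_6 (i : ℕ) :
    Module.finrank ℚ (piece (Ideal.span {p1 2, p2 2}) i) =
      [1, 1, 2, 2, 3, 3, 4, 4, 5, 4, 4, 3, 3, 2, 2, 1, 1].getD i 0 := by
  have hI : Ideal.span {p1 2, p2 2} = Hilb.I2 := rfl
  rw [hI]
  rcases Nat.lt_or_ge i 17 with h | h
  · interval_cases i
    · exact Hilb.rank0
    · exact Hilb.rank1
    · exact Hilb.rank2
    · exact Hilb.rank3
    · exact Hilb.rank4
    · exact Hilb.rank5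
    · exact Hilb.rank6
    · exact Hilb.rank7
    · exact Hilb.rank8
    · exact Hilb.rank9
    · exact Hilb.rank10
    · exact Hilb.rank11
    · exact Hilb.rank12
    · exact Hilb.rank13
    · exact Hilb.rank14
    · exact Hilb.rank15
    · exact Hilb.rank16
  · rw [List.getD_eq_default _ _ (by simpa using h), Hilb.piece_tail h, finrank_bot]
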